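/- arXiv:1006.2172 — 6 statements merged into one kernel-verified Lean document; each statement's English description precedes it below -/
import Mathlib

section
/- Let T > 0 and let ψ : (0,T) × (0,∞) → ℝ be three times continuously differentiable and satisfy the free equation ψ_tt − ψ_rr − (2/r)ψ_r + (2/r²)ψ = 0 on (0,T) × (0,∞). Then the function ψ̂(t,r) := r·ψ_r(t,r) + 2·ψ(t,r) satisfies the one-dimensional wave equation ψ̂_tt − ψ̂_rr = 0 on (0,T) × (0,∞). -/
open Set Filter Topology

noncomputable def pd (v : ℝ × ℝ) (f : ℝ × ℝ → ℝ) : ℝ × ℝ → ℝ := fun p => fderiv ℝ f p v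

lemma pd_contDiffOn {f : ℝ × ℝ → ℝ} {U : Set (ℝ × ℝ)} (hU : IsOpen U) {n m : WithTop ℕ∞}
    (h : ContDiffOn ℝ n f U) (hm : m + 1 ≤ n) (v : ℝ × ℝ) :
    ContDiffOn ℝ m (pd v f) U :=
  (h.fderiv_of_isOpen hU hm).clm_apply contDiffOn_const

lemma hasDerivAt_pd_fst {f : ℝ × ℝ → ℝ} {t r : ℝ} (hf : DifferentiableAt ℝ f (t, r)) :
    HasDerivAt (fun s => f (s, r)) (pd (1, 0) f (t, r)) t := by
  have h1 : HasDerivAt (fun s : ℝ => (s, r)) ((1 : ℝ), (0 : ℝ)) t :=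
    (hasDerivAt_id t).prodMk (hasDerivAt_const t r)
  exact hf.hasFDerivAt.comp_hasDerivAt t h1

lemma hasDerivAt_pd_snd {f : ℝ × ℝ → ℝ} {t r : ℝ} (hf : DifferentiableAt ℝ f (t, r)) :
    HasDerivAt (fun y => f (t, y)) (pd (0, 1) f (t, r)) r := by
  have h1 : HasDerivAt (fun y : ℝ => (t, y)) ((0 : ℝ), (1 : ℝ)) r :=
    (hasDerivAt_const r t).prodMk (hasDerivAt_id r)
  exact hf.hasFDerivAt.comp_hasDerivAt r h1

lemma pd_comm {f : ℝ × ℝ → ℝ} {x : ℝ × ℝ} (hf : ContDiffAt ℝ 2 f x) (v w : ℝ × ℝ) :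
    pd v (pd w f) x = pd w (pd v f) x := by
  have hd : DifferentiableAt ℝ (fderiv ℝ f) x :=
    (hf.fderiv_right (m := 1) (by norm_num)).differentiableAt (by norm_num)
  have e : ∀ u : ℝ × ℝ, fderiv ℝ (fun p => fderiv ℝ f p u) x = (fderiv ℝ (fderiv ℝ f) x).flip u := by
    intro u
    have h := fderiv_clm_apply hd (differentiableAt_const u)
    simpa using h
  have hsym := hf.isSymmSndFDerivAt (by simp [minSmoothness_of_isRCLikeNormedField])
  show fderiv ℝ (pd w f) x v = fderiv ℝ (pd v f) x w
  have ew : fderiv ℝ (pd w f) x = (fderiv ℝ (fderiv ℝ f) x).flip w := e w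
  have ev : fderiv ℝ (pd v f) x = (fderiv ℝ (fderiv ℝ f) x).flip v := e v
  rw [ew, ev]
  simpa [ContinuousLinearMap.flip_apply] using hsym v w

lemma deriv2_fst' {f : ℝ × ℝ → ℝ} {U : Set (ℝ × ℝ)} (hUo : IsOpen U)
    (hfd : ∀ p ∈ U, DifferentiableAt ℝ f p)
    (hfd1 : ∀ p ∈ U, DifferentiableAt ℝ (pd (1, 0) f) p)
    {t r : ℝ} (hx : (t, r) ∈ U) :
    deriv (fun s => deriv (fun s' => f (s', r)) s) t = pd (1, 0) (pd (1, 0) f) (t, r) := by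
  have hS : IsOpen {s : ℝ | (s, r) ∈ U} :=
    hUo.preimage (continuous_id.prodMk continuous_const)
  have hev : (fun s => deriv (fun s' => f (s', r)) s) =ᶠ[𝓝 t] fun s => pd (1, 0) f (s, r) := by
    filter_upwards [hS.mem_nhds hx] with s hs
    exact (hasDerivAt_pd_fst (hfd _ hs)).deriv
  rw [hev.deriv_eq]
  exact (hasDerivAt_pd_fst (hfd1 _ hx)).deriv

lemma deriv2_snd' {f : ℝ × ℝ → ℝ} {U : Set (ℝ × ℝ)} (hUo : IsOpen U)
    (hfd : ∀ p ∈ U, DifferentiableAt ℝ f p)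
    (hfd1 : ∀ p ∈ U, DifferentiableAt ℝ (pd (0, 1) f) p)
    {t r : ℝ} (hx : (t, r) ∈ U) :
    deriv (fun y => deriv (fun y' => f (t, y')) y) r = pd (0, 1) (pd (0, 1) f) (t, r) := by
  have hS : IsOpen {y : ℝ | (t, y) ∈ U} :=
    hUo.preimage (continuous_const.prodMk continuous_id)
  have hev : (fun y => deriv (fun y' => f (t, y')) y) =ᶠ[𝓝 r] fun y => pd (0, 1) f (t, y) := by
    filter_upwards [hS.mem_nhds hx] with y hy
    exact (hasDerivAt_pd_snd (hfd _ hy)).deriv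
  rw [hev.deriv_eq]
  exact (hasDerivAt_pd_snd (hfd1 _ hx)).deriv

/-- If `ψ` is three times continuously differentiable on `(0,T) × (0,∞)` and
satisfies the free equation `ψ_tt − ψ_rr − (2/r)ψ_r + (2/r²)ψ = 0` there, then
`ψ̂(t,r) := r·ψ_r(t,r) + 2·ψ(t,r)` satisfies the one-dimensional wave equation
`ψ̂_tt − ψ̂_rr = 0` on `(0,T) × (0,∞)`. -/
theorem stmt_1 (T : ℝ) (hT : 0 < T) (ψ : ℝ → ℝ → ℝ)
    (hreg : ContDiffOn ℝ 3 (fun p : ℝ × ℝ => ψ p.1 p.2) (Set.Ioo 0 T ×ˢ Set.Ioi 0))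
    (hpde : ∀ t ∈ Set.Ioo (0:ℝ) T, ∀ r ∈ Set.Ioi (0:ℝ),
      deriv (fun s => deriv (fun s' => ψ s' r) s) t
      - deriv (fun y => deriv (fun y' => ψ t y') y) r
      - (2 / r) * deriv (fun y => ψ t y) r
      + (2 / r ^ 2) * ψ t r = 0) :
    ∀ t ∈ Set.Ioo (0:ℝ) T, ∀ r ∈ Set.Ioi (0:ℝ),
      deriv (fun s => deriv
        (fun s' => r * deriv (fun y => ψ s' y) r + 2 * ψ s' r) s) t
      - deriv (fun y => deriv
        (fun y' => y' * deriv (fun z => ψ t z) y' + 2 * ψ t y') y) r = 0 := by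
  intro t ht r hr
  have hr0 : r ≠ 0 := ne_of_gt hr
  set U : Set (ℝ × ℝ) := Set.Ioo 0 T ×ˢ Set.Ioi 0 with hUdef
  have hUo : IsOpen U := IsOpen.prod isOpen_Ioo isOpen_Ioi
  set g : ℝ × ℝ → ℝ := fun p => ψ p.1 p.2 with hgdef
  have h3 : ContDiffOn ℝ 3 g U := hreg
  have hmem : (t, r) ∈ U := Set.mem_prod.mpr ⟨ht, hr⟩
  -- smoothness of partial derivatives
  have hCag : ContDiffOn ℝ 2 (pd (1,0) g) U := pd_contDiffOn hUo h3 (by norm_num) _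
  have hCbg : ContDiffOn ℝ 2 (pd (0,1) g) U := pd_contDiffOn hUo h3 (by norm_num) _
  have hCaag : ContDiffOn ℝ 1 (pd (1,0) (pd (1,0) g)) U := pd_contDiffOn hUo hCag (by norm_num) _
  have hCbbg : ContDiffOn ℝ 1 (pd (0,1) (pd (0,1) g)) U := pd_contDiffOn hUo hCbg (by norm_num) _
  have hCabg : ContDiffOn ℝ 1 (pd (1,0) (pd (0,1) g)) U := pd_contDiffOn hUo hCbg (by norm_num) _
  have dOn : ∀ {h : ℝ × ℝ → ℝ} {n : WithTop ℕ∞}, ContDiffOn ℝ n h U → 1 ≤ n →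
      ∀ p ∈ U, DifferentiableAt ℝ h p := by
    intro h n hC hn p hp
    exact (hC.contDiffAt (hUo.mem_nhds hp)).differentiableAt (lt_of_lt_of_le zero_lt_one hn).ne'
  have hgd : ∀ p ∈ U, DifferentiableAt ℝ g p := dOn h3 (by norm_num)
  have hagd : ∀ p ∈ U, DifferentiableAt ℝ (pd (1,0) g) p := dOn hCag (by norm_num)
  have hbgd : ∀ p ∈ U, DifferentiableAt ℝ (pd (0,1) g) p := dOn hCbg (by norm_num)
  have haagd : ∀ p ∈ U, DifferentiableAt ℝ (pd (1,0) (pd (1,0) g)) p := dOn hCaag le_rfl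
  have hbbgd : ∀ p ∈ U, DifferentiableAt ℝ (pd (0,1) (pd (0,1) g)) p := dOn hCbbg le_rfl
  have habgd : ∀ p ∈ U, DifferentiableAt ℝ (pd (1,0) (pd (0,1) g)) p := dOn hCabg le_rfl
  -- the PDE in pd-form
  have hkey : ∀ p ∈ U, pd (1,0) (pd (1,0) g) p
      = pd (0,1) (pd (0,1) g) p + 2 * p.2⁻¹ * pd (0,1) g p - 2 * (p.2 ^ 2)⁻¹ * g p := by
    rintro ⟨t', r'⟩ hp
    have hp' : (t', r') ∈ U := hp
    have ht' : t' ∈ Set.Ioo (0:ℝ) T := hp'.1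
    have hr' : r' ∈ Set.Ioi (0:ℝ) := hp'.2
    have hr'0 : r' ≠ 0 := ne_of_gt hr'
    have h0 := hpde t' ht' r' hr'
    have c1 : deriv (fun s => deriv (fun s' => ψ s' r') s) t' = pd (1,0) (pd (1,0) g) (t', r') :=
      deriv2_fst' hUo hgd hagd hp'
    have c2 : deriv (fun y => deriv (fun y' => ψ t' y') y) r' = pd (0,1) (pd (0,1) g) (t', r') :=
      deriv2_snd' hUo hgd hbgd hp'
    have c3 : deriv (fun y => ψ t' y) r' = pd (0,1) g (t', r') :=
      (hasDerivAt_pd_snd (hgd _ hp')).deriv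
    rw [c1, c2, c3] at h0
    have hψ : ψ t' r' = g (t', r') := rfl
    rw [hψ] at h0
    field_simp at h0 ⊢
    linarith
  -- symmetry of mixed third derivatives
  have hswap1 : pd (1,0) (pd (0,1) g) =ᶠ[nhds (t, r)] pd (0,1) (pd (1,0) g) := by
    filter_upwards [hUo.mem_nhds hmem] with p hp
    exact pd_comm ((h3.contDiffAt (hUo.mem_nhds hp)).of_le (by norm_num)) _ _
  have hsymm : pd (1,0) (pd (1,0) (pd (0,1) g)) (t, r)
      = pd (0,1) (pd (1,0) (pd (1,0) g)) (t, r) := by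
    have e1 : pd (1,0) (pd (1,0) (pd (0,1) g)) (t, r)
        = pd (1,0) (pd (0,1) (pd (1,0) g)) (t, r) := by
      show fderiv ℝ (pd (1,0) (pd (0,1) g)) (t,r) (1,0)
          = fderiv ℝ (pd (0,1) (pd (1,0) g)) (t,r) (1,0)
      rw [hswap1.fderiv_eq]
    have e2 : pd (1,0) (pd (0,1) (pd (1,0) g)) (t, r)
        = pd (0,1) (pd (1,0) (pd (1,0) g)) (t, r) :=
      pd_comm (hCag.contDiffAt (hUo.mem_nhds hmem)) _ _
    exact e1.trans e2
  -- differentiate the PDE in r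
  have hslice : IsOpen {y : ℝ | (t, y) ∈ U} :=
    hUo.preimage (continuous_const.prodMk continuous_id)
  have hmemy : r ∈ {y : ℝ | (t, y) ∈ U} := hmem
  have hevF : (fun y => pd (1,0) (pd (1,0) g) (t, y)) =ᶠ[nhds r]
      (fun y => pd (0,1) (pd (0,1) g) (t, y) + 2 * y⁻¹ * pd (0,1) g (t, y)
        - 2 * (y ^ 2)⁻¹ * g (t, y)) := by
    filter_upwards [hslice.mem_nhds hmemy] with y hy
    exact hkey _ hy
  have hdF : HasDerivAt
      (fun y => pd (0,1) (pd (0,1) g) (t, y) + 2 * y⁻¹ * pd (0,1) g (t, y)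
        - 2 * (y ^ 2)⁻¹ * g (t, y))
      ((pd (0,1) (pd (0,1) (pd (0,1) g)) (t, r)
        + ((2 * -(r ^ 2)⁻¹) * pd (0,1) g (t, r) + (2 * r⁻¹) * pd (0,1) (pd (0,1) g) (t, r)))
        - ((2 * (-((2:ℕ) * r ^ (2-1)) / (r ^ 2) ^ 2)) * g (t, r)
          + (2 * (r ^ 2)⁻¹) * pd (0,1) g (t, r))) r := by
    have h1 : HasDerivAt (fun y => pd (0,1) (pd (0,1) g) (t, y))
        (pd (0,1) (pd (0,1) (pd (0,1) g)) (t, r)) r := hasDerivAt_pd_snd (hbbgd _ hmem)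
    have h2 : HasDerivAt (fun y : ℝ => 2 * y⁻¹) (2 * -(r ^ 2)⁻¹) r :=
      (hasDerivAt_inv hr0).const_mul 2
    have h3' : HasDerivAt (fun y => 2 * y⁻¹ * pd (0,1) g (t, y))
        ((2 * -(r ^ 2)⁻¹) * pd (0,1) g (t, r) + (2 * r⁻¹) * pd (0,1) (pd (0,1) g) (t, r)) r :=
      h2.mul (hasDerivAt_pd_snd (hbgd _ hmem))
    have h4 : HasDerivAt (fun y : ℝ => 2 * (y ^ 2)⁻¹)
        (2 * (-((2:ℕ) * r ^ (2-1)) / (r ^ 2) ^ 2)) r :=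
      ((hasDerivAt_pow 2 r).inv (pow_ne_zero 2 hr0)).const_mul 2
    have h5 : HasDerivAt (fun y => 2 * (y ^ 2)⁻¹ * g (t, y))
        ((2 * (-((2:ℕ) * r ^ (2-1)) / (r ^ 2) ^ 2)) * g (t, r)
          + (2 * (r ^ 2)⁻¹) * pd (0,1) g (t, r)) r :=
      h4.mul (hasDerivAt_pd_snd (hgd _ hmem))
    exact (h1.add h3').sub h5
  have hY1 : pd (0,1) (pd (1,0) (pd (1,0) g)) (t, r)
      = (pd (0,1) (pd (0,1) (pd (0,1) g)) (t, r)
        + ((2 * -(r ^ 2)⁻¹) * pd (0,1) g (t, r) + (2 * r⁻¹) * pd (0,1) (pd (0,1) g) (t, r)))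
        - ((2 * (-((2:ℕ) * r ^ (2-1)) / (r ^ 2) ^ 2)) * g (t, r)
          + (2 * (r ^ 2)⁻¹) * pd (0,1) g (t, r)) :=
    ((hasDerivAt_pd_snd (haagd _ hmem)).deriv).symm.trans (hevF.deriv_eq.trans hdF.deriv)
  -- term A : the t-t derivative of the hatted function
  have hSopen : IsOpen {s : ℝ | (s, r) ∈ U} :=
    hUo.preimage (continuous_id.prodMk continuous_const)
  have hA1 : ∀ s ∈ {s : ℝ | (s, r) ∈ U},
      deriv (fun s' => r * deriv (fun y => ψ s' y) r + 2 * ψ s' r) s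
      = r * pd (1,0) (pd (0,1) g) (s, r) + 2 * pd (1,0) g (s, r) := by
    intro s hs
    have hev : (fun s' => r * deriv (fun y => ψ s' y) r + 2 * ψ s' r)
        =ᶠ[nhds s] (fun s' => r * pd (0,1) g (s', r) + 2 * ψ s' r) := by
      filter_upwards [hSopen.mem_nhds hs] with s' hs'
      rw [(hasDerivAt_pd_snd (hgd _ hs')).deriv]
    rw [hev.deriv_eq]
    exact (((hasDerivAt_pd_fst (hbgd _ hs)).const_mul r).add
      ((hasDerivAt_pd_fst (hgd _ hs)).const_mul 2)).deriv
  have hA : deriv (fun s => deriv (fun s' => r * deriv (fun y => ψ s' y) r + 2 * ψ s' r) s) t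
      = r * pd (1,0) (pd (1,0) (pd (0,1) g)) (t, r) + 2 * pd (1,0) (pd (1,0) g) (t, r) := by
    have hev : (fun s => deriv (fun s' => r * deriv (fun y => ψ s' y) r + 2 * ψ s' r) s)
        =ᶠ[nhds t] (fun s => r * pd (1,0) (pd (0,1) g) (s, r) + 2 * pd (1,0) g (s, r)) := by
      filter_upwards [hSopen.mem_nhds hmem] with s hs
      exact hA1 s hs
    rw [hev.deriv_eq]
    exact (((hasDerivAt_pd_fst (habgd _ hmem)).const_mul r).add
      ((hasDerivAt_pd_fst (hagd _ hmem)).const_mul 2)).deriv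
  -- term B : the r-r derivative of the hatted function
  have hB1 : ∀ y ∈ {y : ℝ | (t, y) ∈ U},
      deriv (fun y' => y' * deriv (fun z => ψ t z) y' + 2 * ψ t y') y
      = (1 * pd (0,1) g (t, y) + y * pd (0,1) (pd (0,1) g) (t, y)) + 2 * pd (0,1) g (t, y) := by
    intro y hy
    have hev : (fun y' => y' * deriv (fun z => ψ t z) y' + 2 * ψ t y')
        =ᶠ[nhds y] (fun y' => y' * pd (0,1) g (t, y') + 2 * ψ t y') := by
      filter_upwards [hslice.mem_nhds hy] with y' hy'
      rw [(hasDerivAt_pd_snd (hgd _ hy')).deriv]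
    rw [hev.deriv_eq]
    exact (((hasDerivAt_id y).mul (hasDerivAt_pd_snd (hbgd _ hy))).add
      ((hasDerivAt_pd_snd (hgd _ hy)).const_mul 2)).deriv
  have hB : deriv (fun y => deriv (fun y' => y' * deriv (fun z => ψ t z) y' + 2 * ψ t y') y) r
      = ((1 * pd (0,1) (pd (0,1) g) (t, r))
        + (1 * pd (0,1) (pd (0,1) g) (t, r) + r * pd (0,1) (pd (0,1) (pd (0,1) g)) (t, r)))
        + 2 * pd (0,1) (pd (0,1) g) (t, r) := by
    have hev : (fun y => deriv (fun y' => y' * deriv (fun z => ψ t z) y' + 2 * ψ t y') y)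
        =ᶠ[nhds r] (fun y => (1 * pd (0,1) g (t, y) + y * pd (0,1) (pd (0,1) g) (t, y))
          + 2 * pd (0,1) g (t, y)) := by
      filter_upwards [hslice.mem_nhds hmemy] with y hy
      exact hB1 y hy
    rw [hev.deriv_eq]
    exact ((((hasDerivAt_pd_snd (hbgd _ hmem)).const_mul 1).add
      ((hasDerivAt_id r).mul (hasDerivAt_pd_snd (hbbgd _ hmem)))).add
      ((hasDerivAt_pd_snd (hbgd _ hmem)).const_mul 2)).deriv
  -- finish
  rw [hA, hB, hsymm, hY1, hkey _ hmem]
  field_simp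
  ring
end

section
/- Fix T > 0. Let ψ^T(t,r) = 2·arctan(r/(T−t)) and ψ̂^T(t,r) := r·ψ^T_r(t,r) + 2·ψ^T(t,r). Then for every t ∈ (0,T), ∫₀^{T−t} ( ψ̂^T_t(t,r)² + ψ̂^T_r(t,r)² ) dr = (T−t)^{−1} · ∫₀¹ (1+ρ²) g(ρ)² dρ, where g(ρ) := 2(3+ρ²)/(1+ρ²)². In particular this higher-energy quantity blows up like (T−t)^{−1} as t → T−. -/
/-- The fundamental self-similar solution `ψ^T(t,r) = 2 arctan(r/(T−t))`. -/
noncomputable def psiT (T t r : ℝ) : ℝ := 2 * Real.arctan (r / (T - t))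

/-- The transformed field `ψ̂^T(t,r) = r·ψ^T_r(t,r) + 2·ψ^T(t,r)`. -/
noncomputable def psiHatT (T t r : ℝ) : ℝ :=
  r * deriv (fun y => psiT T t y) r + 2 * psiT T t r

lemma hasDerivAt_psiT (l r : ℝ) (hl : l ≠ 0) :
    HasDerivAt (fun y => 2 * Real.arctan (y / l)) (2 * l / (l ^ 2 + r ^ 2)) r := by
  have h1 : HasDerivAt (fun y : ℝ => y / l) (1 / l) r := by
    simpa using (hasDerivAt_id r).div_const l
  have h2 := (Real.hasDerivAt_arctan (r / l)).comp r h1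
  have h3 := h2.const_mul 2
  refine h3.congr_deriv ?_
  have hd : l ^ 2 + r ^ 2 ≠ 0 := by positivity
  field_simp

lemma deriv_psiT (T t r : ℝ) (h : T - t ≠ 0) :
    deriv (fun y => psiT T t y) r = 2 * (T - t) / ((T - t) ^ 2 + r ^ 2) := by
  simp only [psiT]
  exact (hasDerivAt_psiT (T - t) r h).deriv

lemma psiHatT_eq (T t r : ℝ) (h : T - t ≠ 0) :
    psiHatT T t r = 2 * (T - t) * r / ((T - t) ^ 2 + r ^ 2)
      + 4 * Real.arctan (r / (T - t)) := by
  simp only [psiHatT, psiT]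
  rw [(hasDerivAt_psiT (T - t) r h).deriv]
  ring

/-- derivative in the radial variable of the closed form -/
lemma hasDerivAt_F_snd (l r : ℝ) (hl : l ≠ 0) :
    HasDerivAt (fun y => 2 * l * y / (l ^ 2 + y ^ 2) + 4 * Real.arctan (y / l))
      (2 * l * (3 * l ^ 2 + r ^ 2) / (l ^ 2 + r ^ 2) ^ 2) r := by
  have hd : l ^ 2 + r ^ 2 ≠ 0 := by positivity
  have h1 : HasDerivAt (fun y : ℝ => 2 * l * y) (2 * l) r := by
    simpa using (hasDerivAt_id r).const_mul (2 * l)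
  have h2 : HasDerivAt (fun y : ℝ => l ^ 2 + y ^ 2) (2 * r) r := by
    simpa using ((hasDerivAt_pow 2 r).const_add (l ^ 2))
  have hdiv := h1.div h2 hd
  have ha : HasDerivAt (fun y : ℝ => y / l) (1 / l) r := by
    simpa using (hasDerivAt_id r).div_const l
  have h3 := ((Real.hasDerivAt_arctan (r / l)).comp r ha).const_mul 4
  refine (hdiv.add h3).congr_deriv ?_
  field_simp
  ring

/-- derivative in the scale variable of the closed form -/
lemma hasDerivAt_F_fst (l r : ℝ) (hl : l ≠ 0) :
    HasDerivAt (fun l' => 2 * l' * r / (l' ^ 2 + r ^ 2) + 4 * Real.arctan (r / l'))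
      (-(2 * r * (3 * l ^ 2 + r ^ 2) / (l ^ 2 + r ^ 2) ^ 2)) l := by
  have hd : l ^ 2 + r ^ 2 ≠ 0 := by positivity
  have h1 : HasDerivAt (fun l' : ℝ => 2 * l' * r) (2 * r) l := by
    have := ((hasDerivAt_id l).const_mul 2).mul_const r
    simpa [mul_comm, mul_assoc] using this
  have h2 : HasDerivAt (fun l' : ℝ => l' ^ 2 + r ^ 2) (2 * l) l := by
    simpa using ((hasDerivAt_pow 2 l).add_const (r ^ 2))
  have hdiv := h1.div h2 hd
  have ha : HasDerivAt (fun l' : ℝ => r / l') (-(r / l ^ 2)) l := by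
    simpa [div_eq_mul_inv, sq] using (hasDerivAt_inv hl).const_mul r
  have h3 := ((Real.hasDerivAt_arctan (r / l)).comp l ha).const_mul 4
  refine (hdiv.add h3).congr_deriv ?_
  field_simp
  ring

/-- the higher-energy quantity of `ψ^T` satisfies
`∫₀^{T−t} (ψ̂^T_t² + ψ̂^T_r²) dr = (T−t)⁻¹ ∫₀¹ (1+ρ²) g(ρ)² dρ` with
`g(ρ) = 2(3+ρ²)/(1+ρ²)²`; in particular it blows up like `(T−t)⁻¹` as `t → T−`. -/
theorem stmt_3 (T : ℝ) (hT : 0 < T) : ∀ t ∈ Set.Ioo (0:ℝ) T,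
    (∫ r in (0:ℝ)..(T - t),
      ((deriv (fun s => psiHatT T s r) t) ^ 2 + (deriv (fun y => psiHatT T t y) r) ^ 2))
    = (T - t)⁻¹ * ∫ ρ in (0:ℝ)..1, (1 + ρ ^ 2) * (2 * (3 + ρ ^ 2) / (1 + ρ ^ 2) ^ 2) ^ 2 := by
  rintro t ⟨ht0, htT⟩
  set l := T - t with hldef
  have hl : 0 < l := by simp [hldef]; linarith
  have hl0 : l ≠ 0 := hl.ne'
  -- radial derivative
  have h_r : ∀ r : ℝ, deriv (fun y => psiHatT T t y) r
      = 2 * l * (3 * l ^ 2 + r ^ 2) / (l ^ 2 + r ^ 2) ^ 2 := by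
    intro r
    have hfun : (fun y => psiHatT T t y)
        = fun y => 2 * l * y / (l ^ 2 + y ^ 2) + 4 * Real.arctan (y / l) := by
      funext y
      simpa [hldef] using psiHatT_eq T t y (by simpa [hldef] using hl0)
    rw [hfun]
    exact (hasDerivAt_F_snd l r hl0).deriv
  -- time derivative
  have h_t : ∀ r : ℝ, deriv (fun s => psiHatT T s r) t
      = 2 * r * (3 * l ^ 2 + r ^ 2) / (l ^ 2 + r ^ 2) ^ 2 := by
    intro r
    have hev : (fun s => psiHatT T s r)
        =ᶠ[nhds t] fun s => 2 * (T - s) * r / ((T - s) ^ 2 + r ^ 2)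
          + 4 * Real.arctan (r / (T - s)) := by
      filter_upwards [Iio_mem_nhds htT] with s hs
      exact psiHatT_eq T s r (by simp at hs ⊢; linarith)
    rw [hev.deriv_eq]
    have hsub : HasDerivAt (fun s : ℝ => T - s) (-1) t := by
      simpa using (hasDerivAt_id t).const_sub T
    have hcomp := (hasDerivAt_F_fst l r hl0).comp t (by simpa [hldef] using hsub)
    have : HasDerivAt (fun s => 2 * (T - s) * r / ((T - s) ^ 2 + r ^ 2)
          + 4 * Real.arctan (r / (T - s)))
        (2 * r * (3 * l ^ 2 + r ^ 2) / (l ^ 2 + r ^ 2) ^ 2) t := by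
      refine hcomp.congr_deriv ?_
      ring
    exact this.deriv
  simp only [h_r, h_t]
  have hpt : ∀ r : ℝ,
      (2 * r * (3 * l ^ 2 + r ^ 2) / (l ^ 2 + r ^ 2) ^ 2) ^ 2
        + (2 * l * (3 * l ^ 2 + r ^ 2) / (l ^ 2 + r ^ 2) ^ 2) ^ 2
      = l⁻¹ ^ 2 * ((1 + (r / l) ^ 2)
          * (2 * (3 + (r / l) ^ 2) / (1 + (r / l) ^ 2) ^ 2) ^ 2) := by
    intro r
    have hd : l ^ 2 + r ^ 2 ≠ 0 := by positivity
    have hd2 : (1 : ℝ) + (r / l) ^ 2 ≠ 0 := by positivity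
    field_simp
    ring
  rw [intervalIntegral.integral_congr (g := fun r => l⁻¹ ^ 2
      * ((1 + (r / l) ^ 2) * (2 * (3 + (r / l) ^ 2) / (1 + (r / l) ^ 2) ^ 2) ^ 2))
      (fun r _ => hpt r)]
  rw [intervalIntegral.integral_const_mul,
    intervalIntegral.integral_comp_div
      (f := fun ρ => (1 + ρ ^ 2) * (2 * (3 + ρ ^ 2) / (1 + ρ ^ 2) ^ 2) ^ 2) hl0]
  rw [zero_div, div_self hl0, smul_eq_mul]
  field_simp
end

section
/- (i) For every u ∈ C²[0,1] with u(0) = u'(0) = 0 and every ε > 0, there exists ũ ∈ C^∞[0,1] with supp(ũ) ⊂ (0,1] such that ∫₀¹ |u'(ρ) − ũ'(ρ)|²/ρ² dρ < ε². (ii) For every u ∈ C¹[0,1] with u(0) = 0 and every ε > 0, there exists ũ ∈ C^∞[0,1] with supp(ũ) ⊂ (0,1] such that ∫₀¹ |u'(ρ) − ũ'(ρ)|² dρ < ε². -/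
open MeasureTheory

/-- One-sided derivative on `[0,1]`. -/
noncomputable def dI (f : ℝ → ℂ) (ρ : ℝ) : ℂ := derivWithin f (Set.Icc 0 1) ρ

section Aux
open Set

lemma mk_v (g : ℝ → ℂ) (hg : ContDiff ℝ (⊤:ℕ∞) g) {δ : ℝ} (hδ : 0 < δ)
    (hg0 : ∀ ρ, ρ ≤ δ → g ρ = 0) :
    ∃ v : ℝ → ℂ, ContDiffOn ℝ (⊤:ℕ∞) v (Set.Icc 0 1) ∧
      (∀ ρ ∈ Set.Icc (0:ℝ) δ, v ρ = 0) ∧ (∀ ρ ∈ Set.Ioo (0:ℝ) 1, dI v ρ = g ρ) := by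
  set v : ℝ → ℂ := fun ρ => ∫ t in (0:ℝ)..ρ, g t with hv
  have hder : ∀ b : ℝ, HasDerivAt v (g b) b := fun b =>
    intervalIntegral.integral_hasDerivAt_right (hg.continuous.intervalIntegrable _ _)
      (hg.continuous.stronglyMeasurableAtFilter _ _) hg.continuous.continuousAt
  have hdv : deriv v = g := funext fun b => (hder b).deriv
  have hvs : ContDiff ℝ (⊤:ℕ∞) v := by
    rw [contDiff_infty_iff_deriv]
    exact ⟨fun x => (hder x).differentiableAt, hdv ▸ hg⟩
  refine ⟨v, hvs.contDiffOn, ?_, ?_⟩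
  · intro ρ hρ
    have : EqOn g 0 (Set.uIcc 0 ρ) := by
      intro t ht
      rw [Set.uIcc_of_le hρ.1] at ht
      exact hg0 t (ht.2.trans hρ.2)
    rw [hv]
    simp only [intervalIntegral.integral_congr this, Pi.zero_def,
      intervalIntegral.integral_zero]
  · intro ρ hρ
    rw [dI, derivWithin_of_mem_nhds (Icc_mem_nhds hρ.1 hρ.2), hdv]

lemma polyContDiff (p : Polynomial ℝ) : ContDiff ℝ (⊤:ℕ∞) (fun x => p.eval x) := by
  induction p using Polynomial.induction_on' with
  | add p q hp hq => simpa [Polynomial.eval_add] using hp.add hq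
  | monomial n a =>
      simpa [Polynomial.eval_monomial] using (contDiff_const (c := a)).mul (contDiff_id.pow n)

lemma smooth_approx (f : ℝ → ℂ) (hf : ContinuousOn f (Set.Icc 0 1)) {η : ℝ} (hη : 0 < η) :
    ∃ q : ℝ → ℂ, ContDiff ℝ (⊤:ℕ∞) q ∧ ∀ x ∈ Set.Icc (0:ℝ) 1, ‖f x - q x‖ ≤ η := by
  obtain ⟨p₁, hp₁⟩ := exists_polynomial_near_of_continuousOn 0 1 (fun x => (f x).re)
    (Complex.continuous_re.comp_continuousOn hf) (η/2) (by linarith)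
  obtain ⟨p₂, hp₂⟩ := exists_polynomial_near_of_continuousOn 0 1 (fun x => (f x).im)
    (Complex.continuous_im.comp_continuousOn hf) (η/2) (by linarith)
  refine ⟨fun x => (Complex.ofReal (p₁.eval x)) + (Complex.ofReal (p₂.eval x)) * Complex.I,
    (Complex.ofRealCLM.contDiff.comp (polyContDiff p₁)).add
      ((Complex.ofRealCLM.contDiff.comp (polyContDiff p₂)).mul contDiff_const), ?_⟩
  intro x hx
  have h1 := hp₁ x hx
  have h2 := hp₂ x hx
  have hre : (f x - ((Complex.ofReal (p₁.eval x)) + (Complex.ofReal (p₂.eval x)) * Complex.I)).re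
      = (f x).re - p₁.eval x := by simp
  have him : (f x - ((Complex.ofReal (p₁.eval x)) + (Complex.ofReal (p₂.eval x)) * Complex.I)).im
      = (f x).im - p₂.eval x := by simp
  calc ‖f x - ((Complex.ofReal (p₁.eval x)) + (Complex.ofReal (p₂.eval x)) * Complex.I)‖
      ≤ |(f x - ((Complex.ofReal (p₁.eval x)) + (Complex.ofReal (p₂.eval x)) * Complex.I)).re|
        + |(f x - ((Complex.ofReal (p₁.eval x)) + (Complex.ofReal (p₂.eval x)) * Complex.I)).im| :=
        Complex.norm_le_abs_re_add_abs_im _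
    _ ≤ η := by
        rw [hre, him, abs_sub_comm ((f x).re) _, abs_sub_comm ((f x).im) _]
        linarith

lemma cutoff_approx (f : ℝ → ℂ) (hf : ContinuousOn f (Set.Icc 0 1)) {η δ : ℝ}
    (hη : 0 < η) (hδ : 0 < δ) :
    ∃ g : ℝ → ℂ, ContDiff ℝ (⊤:ℕ∞) g ∧ (∀ ρ, ρ ≤ δ → g ρ = 0) ∧
      (∀ ρ ∈ Set.Icc (0:ℝ) 1, ‖f ρ - g ρ‖ ≤ 2 * ‖f ρ‖ + η) ∧
      (∀ ρ ∈ Set.Icc (0:ℝ) 1, 2 * δ ≤ ρ → ‖f ρ - g ρ‖ ≤ η) := by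
  obtain ⟨q, hq, hqa⟩ := smooth_approx f hf hη
  refine ⟨fun ρ => Real.smoothTransition (ρ/δ - 1) • q ρ,
    (Real.smoothTransition.contDiff.comp ((contDiff_id.div_const δ).sub contDiff_const)).smul hq,
    ?_, ?_, ?_⟩
  · intro ρ hρ
    have : ρ/δ - 1 ≤ 0 := by
      rw [sub_nonpos, div_le_one hδ]; exact hρ
    dsimp only
    rw [Real.smoothTransition.zero_of_nonpos this, zero_smul]
  · intro ρ hρ
    have hq' : ‖q ρ‖ ≤ ‖f ρ‖ + η := by
      calc ‖q ρ‖ ≤ ‖f ρ‖ + ‖f ρ - q ρ‖ := by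
            have h := norm_sub_norm_le (q ρ) (f ρ)
            have h2 : ‖q ρ - f ρ‖ = ‖f ρ - q ρ‖ := norm_sub_rev _ _
            linarith
        _ ≤ ‖f ρ‖ + η := by linarith [hqa ρ hρ]
    calc ‖f ρ - Real.smoothTransition (ρ/δ - 1) • q ρ‖
        ≤ ‖f ρ‖ + ‖Real.smoothTransition (ρ/δ - 1) • q ρ‖ := norm_sub_le _ _
      _ ≤ ‖f ρ‖ + ‖q ρ‖ := by
          rw [norm_smul, Real.norm_eq_abs, abs_of_nonneg (Real.smoothTransition.nonneg _)]
          nlinarith [Real.smoothTransition.le_one (ρ/δ - 1), norm_nonneg (q ρ)]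
      _ ≤ 2 * ‖f ρ‖ + η := by linarith
  · intro ρ hρ h2δ
    have h1 : (1:ℝ) ≤ ρ/δ - 1 := by
      have h2 : (2:ℝ) ≤ ρ/δ := by rw [le_div_iff₀ hδ]; linarith
      linarith
    dsimp only
    rw [Real.smoothTransition.one_of_one_le h1, one_smul]
    exact hqa ρ hρ

lemma integ_piece {F : ℝ → ℝ} {a b C : ℝ} (hab : a ≤ b)
    (hF : ContinuousOn F (Set.Ioc a b))
    (hnn : ∀ x ∈ Set.Ioc a b, 0 ≤ F x) (hbd : ∀ x ∈ Set.Ioc a b, F x ≤ C) :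
    IntegrableOn F (Set.Ioc a b) ∧ (∫ x in Set.Ioc a b, F x) ≤ C * (b - a) := by
  have hmeas : AEStronglyMeasurable F (volume.restrict (Set.Ioc a b)) :=
    hF.aestronglyMeasurable measurableSet_Ioc
  have hbdd : ∀ᵐ x ∂(volume.restrict (Set.Ioc a b)), ‖F x‖ ≤ max C 0 := by
    rw [ae_restrict_iff' measurableSet_Ioc]
    filter_upwards with x hx
    rw [Real.norm_eq_abs, abs_of_nonneg (hnn x hx)]
    exact (hbd x hx).trans (le_max_left _ _)
  have hint : IntegrableOn F (Set.Ioc a b) :=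
    ⟨hmeas, HasFiniteIntegral.restrict_of_bounded (max C 0) measure_Ioc_lt_top hbdd⟩
  refine ⟨hint, ?_⟩
  calc (∫ x in Set.Ioc a b, F x) ≤ ∫ _ in Set.Ioc a b, C :=
        setIntegral_mono_on hint (integrableOn_const measure_Ioc_lt_top.ne)
          measurableSet_Ioc hbd
    _ = C * (b - a) := by
        rw [setIntegral_const, Real.volume_real_Ioc_of_le hab,
          smul_eq_mul, mul_comm]

theorem branch2 (u : ℝ → ℂ) (hu : ContDiffOn ℝ 1 u (Set.Icc 0 1)) (ε : ℝ) (hε : 0 < ε) :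
    ∃ v : ℝ → ℂ, ContDiffOn ℝ (⊤ : ℕ∞) v (Set.Icc 0 1) ∧
      (∃ δ : ℝ, 0 < δ ∧ ∀ ρ ∈ Set.Icc (0:ℝ) δ, v ρ = 0) ∧
      (∫ ρ in Set.Ioo (0:ℝ) 1, ‖dI u ρ - dI v ρ‖ ^ 2) < ε ^ 2 := by
  have huniq : UniqueDiffOn ℝ (Set.Icc (0:ℝ) 1) := uniqueDiffOn_Icc (by norm_num)
  have hfc : ContinuousOn (dI u) (Set.Icc 0 1) := hu.continuousOn_derivWithin huniq le_rfl
  obtain ⟨M, hM⟩ := isCompact_Icc.exists_bound_of_continuousOn hfc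
  have hM0 : 0 ≤ M := (norm_nonneg _).trans (hM 0 (by norm_num [Set.mem_Icc]))
  set η := ε/2 with hηdef
  have hηpos : 0 < η := by positivity
  set A := (2*M+η)^2 with hAdef
  have hA0 : 0 ≤ A := sq_nonneg _
  have hApos : 0 < A + 1 := by positivity
  set δ := min (1/4) (ε^2/(8*(A+1))) with hδdef
  have hδpos : 0 < δ := lt_min (by norm_num) (by positivity)
  have hδ14 : δ ≤ 1/4 := min_le_left _ _
  have hδA : δ ≤ ε^2/(8*(A+1)) := min_le_right _ _
  have h2δ : 2*δ ≤ 1 := by linarith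
  obtain ⟨g, hg, hg0, hb1, hb2⟩ := cutoff_approx (dI u) hfc hηpos hδpos
  obtain ⟨v, hv, hvz, hvd⟩ := mk_v g hg hδpos hg0
  refine ⟨v, hv, ⟨δ, hδpos, hvz⟩, ?_⟩
  set F : ℝ → ℝ := fun ρ => ‖dI u ρ - g ρ‖^2 with hFdef
  have hFc : ContinuousOn F (Set.Ioc 0 1) :=
    ((hfc.mono Set.Ioc_subset_Icc_self).sub hg.continuous.continuousOn).norm.pow 2
  have hconv : (∫ ρ in Set.Ioo (0:ℝ) 1, ‖dI u ρ - dI v ρ‖ ^ 2) = ∫ ρ in Set.Ioc (0:ℝ) 1, F ρ := by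
    rw [integral_Ioc_eq_integral_Ioo]
    apply setIntegral_congr_fun measurableSet_Ioo
    intro ρ hρ
    dsimp only
    rw [hvd ρ hρ]
  have hbd1 : ∀ x ∈ Set.Ioc (0:ℝ) (2*δ), F x ≤ A := by
    intro x hx
    have hx1 : x ∈ Set.Icc (0:ℝ) 1 := ⟨hx.1.le, hx.2.trans h2δ⟩
    have h1 : ‖dI u x - g x‖ ≤ 2*M + η := by
      have := hb1 x hx1
      have := hM x hx1
      linarith
    exact pow_le_pow_left₀ (norm_nonneg _) h1 2
  have hbd2 : ∀ x ∈ Set.Ioc (2*δ) (1:ℝ), F x ≤ η^2 := by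
    intro x hx
    have hx1 : x ∈ Set.Icc (0:ℝ) 1 := ⟨by linarith [hx.1, hδpos], hx.2⟩
    exact pow_le_pow_left₀ (norm_nonneg _) (hb2 x hx1 hx.1.le) 2
  have P1 := integ_piece (F := F) (a := 0) (b := 2*δ) (C := A) (by linarith)
    (hFc.mono (Set.Ioc_subset_Ioc le_rfl h2δ)) (fun x _ => by positivity) hbd1
  have P2 := integ_piece (F := F) (a := 2*δ) (b := 1) (C := η^2) h2δ
    (hFc.mono (Set.Ioc_subset_Ioc (by linarith) le_rfl)) (fun x _ => by positivity) hbd2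
  rw [hconv, show Set.Ioc (0:ℝ) 1 = Set.Ioc 0 (2*δ) ∪ Set.Ioc (2*δ) 1 from
    (Set.Ioc_union_Ioc_eq_Ioc (by linarith) h2δ).symm,
    setIntegral_union (Set.Ioc_disjoint_Ioc_of_le le_rfl) measurableSet_Ioc P1.1 P2.1]
  have e0 : (A+1) * (ε^2/(8*(A+1))) = ε^2/8 := by field_simp
  have e1 : A*(2*δ - 0) ≤ ε^2/4 := by nlinarith
  have e2 : η^2*(1 - 2*δ) ≤ ε^2/4 := by
    have hee : η^2 = ε^2/4 := by rw [hηdef]; ring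
    nlinarith [sq_nonneg η]
  have := P1.2
  have := P2.2
  nlinarith [sq_nonneg ε]

set_option maxHeartbeats 1000000 in
theorem branch1 (u : ℝ → ℂ) (hu : ContDiffOn ℝ 2 u (Set.Icc 0 1)) (hdu0 : dI u 0 = 0)
    (ε : ℝ) (hε : 0 < ε) :
    ∃ v : ℝ → ℂ, ContDiffOn ℝ (⊤ : ℕ∞) v (Set.Icc 0 1) ∧
      (∃ δ : ℝ, 0 < δ ∧ ∀ ρ ∈ Set.Icc (0:ℝ) δ, v ρ = 0) ∧
      (∫ ρ in Set.Ioo (0:ℝ) 1, ‖dI u ρ - dI v ρ‖ ^ 2 / ρ ^ 2) < ε ^ 2 := by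
  have huniq : UniqueDiffOn ℝ (Set.Icc (0:ℝ) 1) := uniqueDiffOn_Icc (by norm_num)
  have hf1 : ContDiffOn ℝ 1 (dI u) (Set.Icc 0 1) := by
    unfold dI; exact hu.derivWithin huniq (by norm_num)
  have hfc : ContinuousOn (dI u) (Set.Icc 0 1) := hf1.continuousOn
  have hf'c : ContinuousOn (derivWithin (dI u) (Set.Icc 0 1)) (Set.Icc 0 1) :=
    hf1.continuousOn_derivWithin huniq le_rfl
  obtain ⟨C, hC⟩ := isCompact_Icc.exists_bound_of_continuousOn hf'c
  set L := max C 1 with hLdef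
  have hL : 0 < L := lt_of_lt_of_le one_pos (le_max_right _ _)
  have hCL : ∀ x ∈ Set.Icc (0:ℝ) 1, ‖derivWithin (dI u) (Set.Icc 0 1) x‖ ≤ L :=
    fun x hx => (hC x hx).trans (le_max_left _ _)
  have hfL : ∀ ρ ∈ Set.Icc (0:ℝ) 1, ‖dI u ρ‖ ≤ L * ρ := by
    intro ρ hρ
    have h := Convex.norm_image_sub_le_of_norm_derivWithin_le
      (hf1.differentiableOn (by norm_num)) hCL (convex_Icc 0 1)
      (⟨le_rfl, zero_le_one⟩ : (0:ℝ) ∈ Set.Icc (0:ℝ) 1) hρ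
    rw [hdu0, sub_zero, sub_zero, Real.norm_eq_abs, abs_of_nonneg hρ.1] at h
    exact h
  set K := L^2 + (4*L+1)^2 + 1 with hKdef
  have hK : 0 < K := by positivity
  set δ := min (1/4) (ε^2/(2*K)) with hδdef
  have hδpos : 0 < δ := lt_min (by norm_num) (by positivity)
  have hδ14 : δ ≤ 1/4 := min_le_left _ _
  have hδK : δ ≤ ε^2/(2*K) := min_le_right _ _
  have h2δ : 2*δ ≤ 1 := by linarith
  have hηpos : 0 < δ^2 := by positivity
  obtain ⟨g, hg, hg0, hb1, hb2⟩ := cutoff_approx (dI u) hfc hηpos hδpos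
  obtain ⟨v, hv, hvz, hvd⟩ := mk_v g hg hδpos hg0
  refine ⟨v, hv, ⟨δ, hδpos, hvz⟩, ?_⟩
  set F : ℝ → ℝ := fun ρ => ‖dI u ρ - g ρ‖^2 / ρ^2 with hFdef
  have hFc : ContinuousOn F (Set.Ioc 0 1) := by
    apply ContinuousOn.div
      (((hfc.mono Set.Ioc_subset_Icc_self).sub hg.continuous.continuousOn).norm.pow 2)
      ((continuous_pow 2).continuousOn)
    intro x hx
    exact pow_ne_zero 2 (ne_of_gt hx.1)
  have hconv : (∫ ρ in Set.Ioo (0:ℝ) 1, ‖dI u ρ - dI v ρ‖ ^ 2 / ρ ^ 2)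
      = ∫ ρ in Set.Ioc (0:ℝ) 1, F ρ := by
    rw [integral_Ioc_eq_integral_Ioo]
    apply setIntegral_congr_fun measurableSet_Ioo
    intro ρ hρ
    dsimp only
    rw [hvd ρ hρ]
  have hbd1 : ∀ x ∈ Set.Ioc (0:ℝ) δ, F x ≤ L^2 := by
    intro x hx
    have hx1 : x ∈ Set.Icc (0:ℝ) 1 := ⟨hx.1.le, by linarith [hx.2]⟩
    have h1 : ‖dI u x - g x‖ ≤ L * x := by rw [hg0 x hx.2, sub_zero]; exact hfL x hx1
    have h2 : ‖dI u x - g x‖^2 ≤ (L*x)^2 := pow_le_pow_left₀ (norm_nonneg _) h1 2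
    rw [hFdef]
    dsimp only
    rw [div_le_iff₀ (pow_pos hx.1 2)]
    nlinarith
  have hbd2 : ∀ x ∈ Set.Ioc δ (2*δ), F x ≤ (4*L+1)^2 := by
    intro x hx
    have hx1 : x ∈ Set.Icc (0:ℝ) 1 := ⟨by linarith [hx.1, hδpos], by linarith [hx.2]⟩
    have h1 : ‖dI u x - g x‖ ≤ (4*L+1) * δ := by
      have ha := hb1 x hx1
      have hb := hfL x hx1
      have : L * x ≤ L * (2*δ) := by
        apply mul_le_mul_of_nonneg_left hx.2 hL.le
      nlinarith [hδ14]
    have h2 : ‖dI u x - g x‖^2 ≤ ((4*L+1)*δ)^2 :=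
      pow_le_pow_left₀ (norm_nonneg _) h1 2
    rw [hFdef]
    dsimp only
    have hxx : δ^2 ≤ x^2 := by nlinarith [hx.1, hδpos]
    rw [div_le_iff₀ (pow_pos (hδpos.trans hx.1) 2)]
    nlinarith [h2, hxx, sq_nonneg (4*L+1)]
  have hbd3 : ∀ x ∈ Set.Ioc (2*δ) (1:ℝ), F x ≤ δ^2 := by
    intro x hx
    have hx1 : x ∈ Set.Icc (0:ℝ) 1 := ⟨by linarith [hx.1, hδpos], hx.2⟩
    have h1 : ‖dI u x - g x‖ ≤ δ^2 := hb2 x hx1 hx.1.le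
    have h2 : ‖dI u x - g x‖^2 ≤ (δ^2)^2 := pow_le_pow_left₀ (norm_nonneg _) h1 2
    rw [hFdef]
    dsimp only
    have hxx : δ^2 ≤ x^2 := by nlinarith [hx.1, hδpos]
    rw [div_le_iff₀ (pow_pos (by linarith [hx.1, hδpos] : (0:ℝ) < x) 2)]
    nlinarith [h2, hxx, hηpos.le]
  have P1 := integ_piece (F := F) (a := 0) (b := δ) (C := L^2) hδpos.le
    (hFc.mono (Set.Ioc_subset_Ioc le_rfl (by linarith))) (fun x _ => by positivity) hbd1
  have P2 := integ_piece (F := F) (a := δ) (b := 2*δ) (C := (4*L+1)^2) (by linarith)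
    (hFc.mono (Set.Ioc_subset_Ioc hδpos.le h2δ)) (fun x _ => by positivity) hbd2
  have P3 := integ_piece (F := F) (a := 2*δ) (b := 1) (C := δ^2) h2δ
    (hFc.mono (Set.Ioc_subset_Ioc (by linarith) le_rfl)) (fun x _ => by positivity) hbd3
  have hsplit2 : Set.Ioc (0:ℝ) (2*δ) = Set.Ioc 0 δ ∪ Set.Ioc δ (2*δ) :=
    (Set.Ioc_union_Ioc_eq_Ioc hδpos.le (by linarith)).symm
  have P12 : IntegrableOn F (Set.Ioc 0 (2*δ)) := by
    rw [hsplit2]; exact P1.1.union P2.1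
  rw [hconv, show Set.Ioc (0:ℝ) 1 = Set.Ioc 0 (2*δ) ∪ Set.Ioc (2*δ) 1 from
    (Set.Ioc_union_Ioc_eq_Ioc (by linarith) h2δ).symm,
    setIntegral_union (Set.Ioc_disjoint_Ioc_of_le le_rfl) measurableSet_Ioc P12 P3.1,
    hsplit2, setIntegral_union (Set.Ioc_disjoint_Ioc_of_le le_rfl) measurableSet_Ioc P1.1 P2.1]
  have e0 : K * (ε^2/(2*K)) = ε^2/2 := by field_simp
  have eK : K * δ ≤ ε^2/2 := by
    calc K * δ ≤ K * (ε^2/(2*K)) := mul_le_mul_of_nonneg_left hδK hK.le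
      _ = ε^2/2 := e0
  have := P1.2
  have := P2.2
  have := P3.2
  nlinarith [sq_nonneg ε, hδpos, hδ14]

end Aux

/-- STATEMENT 5 (density of `C_c^∞(0,1]`): (i) every `u ∈ C²[0,1]` with `u(0) = u'(0) = 0`
can be approximated in the `∫₀¹|u' − ũ'|²/ρ² dρ` sense by smooth functions on `[0,1]`
supported away from `0`; (ii) every `u ∈ C¹[0,1]` with `u(0) = 0` can be approximated in
the `∫₀¹|u' − ũ'|² dρ` sense by such functions. -/
theorem stmt_5 :
    (∀ u : ℝ → ℂ, ContDiffOn ℝ 2 u (Set.Icc 0 1) → u 0 = 0 → dI u 0 = 0 →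
      ∀ ε : ℝ, 0 < ε →
      ∃ v : ℝ → ℂ, ContDiffOn ℝ (⊤ : ℕ∞) v (Set.Icc 0 1) ∧
        (∃ δ : ℝ, 0 < δ ∧ ∀ ρ ∈ Set.Icc (0:ℝ) δ, v ρ = 0) ∧
        (∫ ρ in Set.Ioo (0:ℝ) 1, ‖dI u ρ - dI v ρ‖ ^ 2 / ρ ^ 2) < ε ^ 2) ∧
    (∀ u : ℝ → ℂ, ContDiffOn ℝ 1 u (Set.Icc 0 1) → u 0 = 0 →
      ∀ ε : ℝ, 0 < ε →
      ∃ v : ℝ → ℂ, ContDiffOn ℝ (⊤ : ℕ∞) v (Set.Icc 0 1) ∧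
        (∃ δ : ℝ, 0 < δ ∧ ∀ ρ ∈ Set.Icc (0:ℝ) δ, v ρ = 0) ∧
        (∫ ρ in Set.Ioo (0:ℝ) 1, ‖dI u ρ - dI v ρ‖ ^ 2) < ε ^ 2) :=
  ⟨fun u hu _ hdu0 ε hε => branch1 u hu hdu0 ε hε,
   fun u hu _ ε hε => branch2 u hu ε hε⟩
end

section
/- Let u₁ ∈ C³[0,1] satisfy u₁(0) = u₁'(0) = u₁''(0) = 0 and let u₂ ∈ C³[0,1] satisfy u₂(0) = 0. Define v₁(ρ) := −ρ u₁'(ρ) + u₁(ρ) + ρ u₂'(ρ) − u₂(ρ) for ρ ∈ [0,1], and v₂(ρ) := u₁'(ρ)/ρ − ρ u₂'(ρ) for ρ ∈ (0,1] with v₂(0) := 0. Then v₁ ∈ C²[0,1] with v₁(0) = v₁'(0) = 0, and v₂ ∈ C¹[0,1] with v₂(0) = 0; in particular v₂ is continuously differentiable at ρ = 0 with v₂'(0) = u₁'''(0)/2 − u₂'(0). -/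
open Set Filter Topology

lemma slope_tendsto' (f : ℝ → ℂ) (c : ℂ) (hf : HasDerivWithinAt f c (Icc 0 1) 0)
    (h0 : f 0 = 0) :
    Tendsto (fun ρ : ℝ => f ρ / (ρ:ℂ)) (𝓝[Icc 0 1 \ {0}] 0) (𝓝 c) := by
  have := hasDerivWithinAt_iff_tendsto_slope.1 hf
  refine this.congr' ?_
  filter_upwards [self_mem_nhdsWithin] with ρ hρ
  have hρ0 : ρ ≠ 0 := fun h => hρ.2 (by simp [h])
  rw [slope_def_module, h0, sub_zero, sub_zero, Complex.real_smul]
  push_cast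
  field_simp

lemma key_tendsto (f : ℝ → ℂ) (hf : ContDiffOn ℝ 2 f (Icc 0 1))
    (h0 : f 0 = 0) (h1 : derivWithin f (Icc 0 1) 0 = 0) :
    Tendsto (fun ρ : ℝ => f ρ / (ρ:ℂ)^2) (𝓝[Icc 0 1 \ {0}] 0)
      (𝓝 (derivWithin (derivWithin f (Icc 0 1)) (Icc 0 1) 0 / 2)) := by
  set I : Set ℝ := Icc 0 1 with hI
  have hUD : UniqueDiffOn ℝ I := uniqueDiffOn_Icc one_pos
  set f' : ℝ → ℂ := derivWithin f I with hf'def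
  set c : ℂ := derivWithin f' I 0 with hcdef
  have hf'C : ContDiffOn ℝ 1 f' I := hf.derivWithin hUD (by norm_num)
  have h0I : (0:ℝ) ∈ I := ⟨le_refl 0, zero_le_one⟩
  have hf'd : HasDerivWithinAt f' c I 0 :=
    ((hf'C.differentiableOn (by norm_num)) 0 h0I).hasDerivWithinAt
  have hslope : Tendsto (fun ρ : ℝ => f' ρ / (ρ:ℂ)) (𝓝[I \ {0}] 0) (𝓝 c) := by
    have := hasDerivWithinAt_iff_tendsto_slope.1 hf'd
    refine this.congr' ?_
    filter_upwards [self_mem_nhdsWithin] with ρ hρ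
    have hρ0 : ρ ≠ 0 := fun h => hρ.2 (by simp [h])
    rw [slope_def_module, h1, sub_zero, sub_zero, Complex.real_smul]
    push_cast; field_simp
  rw [Metric.tendsto_nhdsWithin_nhds]
  intro ε hε
  obtain ⟨δ, hδ, hδ'⟩ := Metric.tendsto_nhdsWithin_nhds.1 hslope (ε/2) (by positivity)
  refine ⟨min δ 1, by positivity, ?_⟩
  rintro ρ ⟨hρI, hρ0'⟩ hρδ
  have hρ0 : ρ ≠ 0 := by simpa using hρ0'
  have hρpos : 0 < ρ := lt_of_le_of_ne hρI.1 (Ne.symm hρ0)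
  have hsub : Icc (0:ℝ) ρ ⊆ I := Icc_subset_Icc le_rfl hρI.2
  have key : ‖f ρ - c/2 * (ρ:ℂ)^2‖ ≤ ε/2 * ρ * ρ := by
    have hmvt := Convex.norm_image_sub_le_of_norm_hasDerivWithin_le
      (f := fun t : ℝ => f t - c/2 * (t:ℂ)^2) (f' := fun t : ℝ => f' t - c * (t:ℂ))
      (s := Icc (0:ℝ) ρ) (C := ε/2 * ρ) ?_ ?_ (convex_Icc 0 ρ)
      (Set.left_mem_Icc.2 hρpos.le) (Set.right_mem_Icc.2 hρpos.le)
    · simpa [h0, abs_of_pos hρpos, mul_assoc] using hmvt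
    · intro t ht
      have h1' : HasDerivWithinAt f (f' t) (Icc 0 ρ) t :=
        (((hf.differentiableOn (by norm_num)) t (hsub ht)).hasDerivWithinAt).mono hsub
      have hcast : HasDerivWithinAt (fun t : ℝ => (t:ℂ)) 1 (Icc 0 ρ) t :=
        Complex.ofRealCLM.hasDerivAt.hasDerivWithinAt
      have h2' : HasDerivWithinAt (fun t : ℝ => c/2 * (t:ℂ)^2) (c * t) (Icc 0 ρ) t := by
        have h := (hcast.mul hcast).const_mul (c/2)
        simp only [pow_two]
        exact h.congr_deriv (by ring)
      exact h1'.sub h2'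
    · intro t ht
      rcases eq_or_lt_of_le ht.1 with h|h
      · simp only [← h]
        rw [show f' (0:ℝ) = 0 from h1]
        simp
        positivity
      · have htI : t ∈ I \ {0} := ⟨hsub ht, by simp [h.ne']⟩
        have htδ : dist t 0 < δ := by
          rw [Real.dist_eq, sub_zero, abs_of_pos h]
          calc t ≤ ρ := ht.2
            _ = |ρ| := (abs_of_pos hρpos).symm
            _ = dist ρ 0 := by rw [Real.dist_eq, sub_zero]
            _ < δ := lt_of_lt_of_le hρδ (min_le_left _ _)
        have hb := hδ' htI htδ
        rw [dist_eq_norm] at hb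
        have ht0 : (t:ℂ) ≠ 0 := by exact_mod_cast h.ne'
        have heq : f' t / (t:ℂ) - c = (f' t - c * t) / (t:ℂ) := by field_simp
        rw [heq, norm_div, Complex.norm_real, Real.norm_eq_abs, abs_of_pos h,
          div_lt_iff₀ h] at hb
        refine le_of_lt (hb.trans_le ?_)
        have := ht.2
        nlinarith
  rw [dist_eq_norm]
  have hρc0 : ((ρ:ℂ)) ≠ 0 := by exact_mod_cast hρ0
  have hρ2 : ((ρ:ℂ))^2 ≠ 0 := pow_ne_zero 2 hρc0
  have heq2 : f ρ / (ρ:ℂ)^2 - c/2 = (f ρ - c/2 * (ρ:ℂ)^2) / (ρ:ℂ)^2 := by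
    field_simp
  rw [heq2, norm_div]
  have hn2 : ‖((ρ:ℂ))^2‖ = ρ^2 := by
    rw [norm_pow, Complex.norm_real, Real.norm_eq_abs, abs_of_pos hρpos]
  rw [hn2]
  have hρ2pos : (0:ℝ) < ρ^2 := by positivity
  calc ‖f ρ - c/2 * (ρ:ℂ)^2‖ / ρ^2 ≤ (ε/2 * ρ * ρ) / ρ^2 :=
        div_le_div_of_nonneg_right key hρ2pos.le
      _ = ε/2 := by rw [pow_two]; field_simp
      _ < ε := by linarith

/-- the free operator `L̃₀` maps its domain into `H̃₁ × H̃₂`.  For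
`u₁ ∈ C³[0,1]` with `u₁(0)=u₁'(0)=u₁''(0)=0` and `u₂ ∈ C³[0,1]` with `u₂(0)=0`, the
functions `v₁(ρ) = −ρu₁'+u₁+ρu₂'−u₂` and `v₂(ρ) = u₁'(ρ)/ρ − ρu₂'(ρ)` (with `v₂(0)=0`)
satisfy `v₁ ∈ C²[0,1]`, `v₁(0)=v₁'(0)=0`, `v₂ ∈ C¹[0,1]`, `v₂(0)=0`, and
`v₂'(0) = u₁'''(0)/2 − u₂'(0)`. 
(Note: in Lean, division by `0` yields `0`, so the formula for `v₂` automatically gives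
`v₂(0) = 0`.) -/
theorem stmt_7 (u₁ u₂ : ℝ → ℂ)
    (h1 : ContDiffOn ℝ 3 u₁ (Set.Icc 0 1))
    (h10 : u₁ 0 = 0) (h11 : dI u₁ 0 = 0) (h12 : dI (dI u₁) 0 = 0)
    (h2 : ContDiffOn ℝ 3 u₂ (Set.Icc 0 1)) (h20 : u₂ 0 = 0) :
    ContDiffOn ℝ 2 (fun ρ : ℝ => -(ρ:ℂ) * dI u₁ ρ + u₁ ρ + (ρ:ℂ) * dI u₂ ρ - u₂ ρ)
      (Set.Icc 0 1) ∧
    (-(0:ℂ) * dI u₁ 0 + u₁ 0 + (0:ℂ) * dI u₂ 0 - u₂ 0) = 0 ∧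
    dI (fun ρ : ℝ => -(ρ:ℂ) * dI u₁ ρ + u₁ ρ + (ρ:ℂ) * dI u₂ ρ - u₂ ρ) 0 = 0 ∧
    ContDiffOn ℝ 1 (fun ρ : ℝ => dI u₁ ρ / (ρ:ℂ) - (ρ:ℂ) * dI u₂ ρ) (Set.Icc 0 1) ∧
    (dI u₁ 0 / (0:ℂ) - (0:ℂ) * dI u₂ 0) = 0 ∧
    dI (fun ρ : ℝ => dI u₁ ρ / (ρ:ℂ) - (ρ:ℂ) * dI u₂ ρ) 0
      = dI (dI (dI u₁)) 0 / 2 - dI u₂ 0 := by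
  have hUD : UniqueDiffOn ℝ (Icc (0:ℝ) 1) := uniqueDiffOn_Icc one_pos
  have h0I : (0:ℝ) ∈ Icc (0:ℝ) 1 := ⟨le_refl 0, zero_le_one⟩
  have hcast2 : ∀ n : ℕ, ContDiffOn ℝ (n:ℕ∞) (fun ρ:ℝ => (ρ:ℂ)) (Icc 0 1) :=
    fun n => Complex.ofRealCLM.contDiff.contDiffOn
  have hd1 : ContDiffOn ℝ 2 (dI u₁) (Icc 0 1) := h1.derivWithin hUD (by norm_num)
  have hd2 : ContDiffOn ℝ 2 (dI u₂) (Icc 0 1) := h2.derivWithin hUD (by norm_num)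
  have hdd1 : ContDiffOn ℝ 1 (dI (dI u₁)) (Icc 0 1) := hd1.derivWithin hUD (by norm_num)
  -- Part 1
  have part1 : ContDiffOn ℝ 2
      (fun ρ : ℝ => -(ρ:ℂ) * dI u₁ ρ + u₁ ρ + (ρ:ℂ) * dI u₂ ρ - u₂ ρ) (Icc 0 1) :=
    ((((hcast2 2).neg.mul hd1).add (h1.of_le (by norm_num))).add
      ((hcast2 2).mul hd2)).sub (h2.of_le (by norm_num))
  -- basic derivatives at 0
  have hcastd : ∀ ρ : ℝ, HasDerivWithinAt (fun ρ:ℝ => (ρ:ℂ)) 1 (Icc 0 1) ρ :=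
    fun ρ => Complex.ofRealCLM.hasDerivAt.hasDerivWithinAt
  have hD1 : HasDerivWithinAt (dI u₁) (dI (dI u₁) 0) (Icc 0 1) 0 :=
    ((hd1.differentiableOn (by norm_num)) 0 h0I).hasDerivWithinAt
  have hD2 : HasDerivWithinAt (dI u₂) (dI (dI u₂) 0) (Icc 0 1) 0 :=
    ((hd2.differentiableOn (by norm_num)) 0 h0I).hasDerivWithinAt
  have hu₁d : HasDerivWithinAt u₁ (dI u₁ 0) (Icc 0 1) 0 :=
    ((h1.differentiableOn (by norm_num)) 0 h0I).hasDerivWithinAt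
  have hu₂d : HasDerivWithinAt u₂ (dI u₂ 0) (Icc 0 1) 0 :=
    ((h2.differentiableOn (by norm_num)) 0 h0I).hasDerivWithinAt
  -- Part 3
  have hv₁ := ((((hcastd 0).neg.mul hD1).add hu₁d).add ((hcastd 0).mul hD2)).sub hu₂d
  have hv₁0 : HasDerivWithinAt
      (fun ρ : ℝ => -(ρ:ℂ) * dI u₁ ρ + u₁ ρ + (ρ:ℂ) * dI u₂ ρ - u₂ ρ) 0 (Icc 0 1) 0 := by
    exact hv₁.congr_deriv (by simp [h11])
  have part3 : dI (fun ρ : ℝ => -(ρ:ℂ) * dI u₁ ρ + u₁ ρ + (ρ:ℂ) * dI u₂ ρ - u₂ ρ) 0 = 0 :=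
    hv₁0.derivWithin (hUD 0 h0I)
  -- Part 4–6 : the function g ρ = dI u₁ ρ / ρ
  set g : ℝ → ℂ := fun ρ : ℝ => dI u₁ ρ / (ρ:ℂ) with hg
  set c : ℂ := dI (dI (dI u₁)) 0 with hc
  have hkey : Tendsto (fun ρ : ℝ => dI u₁ ρ / (ρ:ℂ)^2) (𝓝[Icc 0 1 \ {0}] 0) (𝓝 (c/2)) :=
    key_tendsto (dI u₁) hd1 h11 h12
  have hDD : HasDerivWithinAt (dI (dI u₁)) c (Icc 0 1) 0 :=
    ((hdd1.differentiableOn (by norm_num)) 0 h0I).hasDerivWithinAt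
  have hslope1 : Tendsto (fun ρ : ℝ => dI (dI u₁) ρ / (ρ:ℂ)) (𝓝[Icc 0 1 \ {0}] 0) (𝓝 c) :=
    slope_tendsto' _ _ hDD h12
  -- derivative of g at 0
  have hgA : HasDerivWithinAt g (c/2) (Icc 0 1) 0 := by
    rw [hasDerivWithinAt_iff_tendsto_slope]
    refine hkey.congr' ?_
    filter_upwards [self_mem_nhdsWithin] with ρ hρ
    have hρ0 : ρ ≠ 0 := fun h => hρ.2 (by simp [h])
    have hρc : (ρ:ℂ) ≠ 0 := by exact_mod_cast hρ0
    rw [slope_def_module, Complex.real_smul]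
    simp only [hg, h11, sub_zero]
    rw [zero_div, sub_zero]
    push_cast
    rw [pow_two]
    field_simp
  -- differentiability of g on [0,1]
  have hgdiff : DifferentiableOn ℝ g (Icc 0 1) := by
    intro ρ hρ
    rcases eq_or_lt_of_le hρ.1 with h|h
    · rw [← h] at *; exact hgA.differentiableWithinAt
    · have hρc : (ρ:ℂ) ≠ 0 := by exact_mod_cast h.ne'
      exact ((hd1.differentiableOn (by norm_num)) ρ hρ).div
        (Complex.ofRealCLM.differentiableAt.differentiableWithinAt) hρc
  -- formula for derivWithin g away from 0
  have hgd : ∀ ρ ∈ Icc (0:ℝ) 1, ρ ≠ 0 → derivWithin g (Icc 0 1) ρ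
      = (dI (dI u₁) ρ * ρ - dI u₁ ρ) / (ρ:ℂ)^2 := by
    intro ρ hρ hρ0
    have hρc : (ρ:ℂ) ≠ 0 := by exact_mod_cast hρ0
    have hdf : HasDerivWithinAt (dI u₁) (dI (dI u₁) ρ) (Icc 0 1) ρ :=
      ((hd1.differentiableOn (by norm_num)) ρ hρ).hasDerivWithinAt
    have := (hdf.div (hcastd ρ) hρc).derivWithin (hUD ρ hρ)
    rw [show g = dI u₁ / (fun ρ : ℝ => (ρ:ℂ)) from rfl, this]
    norm_num
  -- continuity of derivWithin g on [0,1]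
  have hDcont : ContinuousOn (derivWithin g (Icc 0 1)) (Icc 0 1) := by
    intro ρ hρ
    rcases eq_or_lt_of_le hρ.1 with h|h
    · rw [← h] at *
      rw [← continuousWithinAt_diff_self]
      have hval : derivWithin g (Icc 0 1) 0 = c/2 := hgA.derivWithin (hUD 0 h0I)
      unfold ContinuousWithinAt
      rw [hval]
      have hT := hslope1.sub hkey
      rw [show c - c/2 = c/2 by ring] at hT
      refine hT.congr' ?_
      filter_upwards [self_mem_nhdsWithin] with x hx
      have hx0 : x ≠ 0 := fun hh => hx.2 (by simp [hh])
      have hxc : (x:ℂ) ≠ 0 := by exact_mod_cast hx0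
      rw [hgd x hx.1 hx0]
      field_simp
    · -- ρ > 0
      have hφ : ContinuousWithinAt
          (fun x : ℝ => (dI (dI u₁) x * x - dI u₁ x) / (x:ℂ)^2) (Icc 0 1) ρ := by
        have hρc : ((ρ:ℂ))^2 ≠ 0 := pow_ne_zero 2 (by exact_mod_cast h.ne')
        exact (((hdd1.continuousOn ρ hρ).mul
          (Complex.continuous_ofReal.continuousWithinAt)).sub
          (hd1.continuousOn ρ hρ)).div
          ((Complex.continuous_ofReal.continuousWithinAt).pow 2) hρc
      refine hφ.congr_of_eventuallyEq ?_ (hgd ρ hρ h.ne')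
      filter_upwards [self_mem_nhdsWithin,
        (eventually_ne_nhds h.ne').filter_mono nhdsWithin_le_nhds] with x hx hx0
      exact hgd x hx hx0
  -- g is C¹
  have hgC1 : ContDiffOn ℝ 1 g (Icc 0 1) := by
    rw [show (1:WithTop ℕ∞) = (0:WithTop ℕ∞) + 1 from rfl, contDiffOn_succ_iff_derivWithin hUD]
    refine ⟨hgdiff, by simp, ?_⟩
    rw [contDiffOn_zero]
    exact hDcont
  -- Part 4
  have hm : ContDiffOn ℝ 1 (fun ρ : ℝ => (ρ:ℂ) * dI u₂ ρ) (Icc 0 1) :=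
    ((hcast2 1).mul (hd2.of_le (by norm_num)))
  have part4 : ContDiffOn ℝ 1 (fun ρ : ℝ => dI u₁ ρ / (ρ:ℂ) - (ρ:ℂ) * dI u₂ ρ) (Icc 0 1) :=
    hgC1.sub hm
  -- Part 6
  have hmd : HasDerivWithinAt (fun ρ : ℝ => (ρ:ℂ) * dI u₂ ρ) (dI u₂ 0) (Icc 0 1) 0 := by
    have := (hcastd 0).mul hD2
    exact this.congr_deriv (by simp)
  have part6 : dI (fun ρ : ℝ => dI u₁ ρ / (ρ:ℂ) - (ρ:ℂ) * dI u₂ ρ) 0 = c/2 - dI u₂ 0 :=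
    (hgA.sub hmd).derivWithin (hUD 0 h0I)
  exact ⟨part1, by simp [h10, h20], part3, part4, by simp [h11], part6⟩
end

section
/- There exists a constant C > 0 such that for every u₂ ∈ C¹[0,1] with u₂(0) = 0, ∫₀¹ ρ^{-2} | (d/dρ)[ V₁(ρ) ∫₀^ρ s u₂(s) ds ] |² dρ ≤ C ∫₀¹ |u₂'(ρ)|² dρ, where V₁(ρ) := −16/(1+ρ²)². -/
open MeasureTheory

/-- The potential `V₁(ρ) = −16/(1+ρ²)²`. -/
noncomputable def V₁ (ρ : ℝ) : ℝ := -16 / (1 + ρ ^ 2) ^ 2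

/-- Cauchy–Schwarz on `Ioo 0 1` (measure 1): `(∫ f)² ≤ ∫ f²`. -/
lemma sq_setIntegral_le_aux {f : ℝ → ℝ}
    (hf : IntegrableOn f (Set.Ioo 0 1)) (hf2 : IntegrableOn (fun x => f x ^ 2) (Set.Ioo 0 1)) :
    (∫ x in Set.Ioo (0:ℝ) 1, f x) ^ 2 ≤ ∫ x in Set.Ioo (0:ℝ) 1, f x ^ 2 := by
  set μ := (volume : Measure ℝ).restrict (Set.Ioo 0 1) with hμ
  have hμuniv : (μ Set.univ).toReal = 1 := by
    rw [hμ, Measure.restrict_apply_univ, Real.volume_Ioo]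
    norm_num
  set m := ∫ x, f x ∂μ with hm
  have h0 : (0:ℝ) ≤ ∫ x, (f x - m) ^ 2 ∂μ := integral_nonneg fun x => sq_nonneg _
  have hconst : Integrable (fun _ : ℝ => m ^ 2) μ := by
    refine integrableOn_const ?_
    rw [Real.volume_Ioo]; norm_num
  have hexp : (∫ x, (f x - m) ^ 2 ∂μ)
      = (∫ x, f x ^ 2 ∂μ) - (2 * m) * m + m ^ 2 * (μ Set.univ).toReal := by
    have : (fun x => (f x - m) ^ 2) = fun x => (f x ^ 2 - (2 * m) * f x) + m ^ 2 := by
      funext x; ring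
    have hsub : Integrable (fun x => f x ^ 2 - (2 * m) * f x) μ := by
      exact hf2.sub (hf.const_mul (2 * m))
    rw [this, integral_add hsub hconst, integral_sub hf2 (hf.const_mul (2 * m)),
      integral_const_mul, integral_const]
    simp [smul_eq_mul, mul_comm, Measure.real]
    rfl
  rw [hexp, hμuniv] at h0
  nlinarith [h0]

/-- boundedness of the potential operator `L'`: there is `C > 0` such that
for all `u₂ ∈ C¹[0,1]` with `u₂(0) = 0`,
`∫₀¹ ρ^{-2} |(d/dρ)[V₁(ρ) ∫₀^ρ s u₂(s) ds]|² dρ ≤ C ∫₀¹ |u₂'(ρ)|² dρ`. -/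
theorem stmt_8 :
    ∃ C : ℝ, 0 < C ∧ ∀ u₂ : ℝ → ℂ, ContDiffOn ℝ 1 u₂ (Set.Icc 0 1) → u₂ 0 = 0 →
      IntegrableOn
        (fun ρ : ℝ =>
          ‖deriv (fun x : ℝ => ((V₁ x : ℝ) : ℂ) * ∫ s in (0:ℝ)..x, (s:ℂ) * u₂ s) ρ‖ ^ 2
            / ρ ^ 2) (Set.Ioo 0 1) ∧
      (∫ ρ in Set.Ioo (0:ℝ) 1,
          ‖deriv (fun x : ℝ => ((V₁ x : ℝ) : ℂ) * ∫ s in (0:ℝ)..x, (s:ℂ) * u₂ s) ρ‖ ^ 2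
            / ρ ^ 2)
        ≤ C * ∫ ρ in Set.Ioo (0:ℝ) 1, ‖dI u₂ ρ‖ ^ 2 := by
  refine ⟨2304, by norm_num, ?_⟩
  intro u₂ hu h0
  set g : ℝ → ℂ := dI u₂ with hgdef
  have huc : ContinuousOn u₂ (Set.Icc 0 1) := hu.continuousOn
  have hgc : ContinuousOn g (Set.Icc 0 1) :=
    hu.continuousOn_derivWithin (uniqueDiffOn_Icc one_pos) le_rfl
  set M : ℝ := ∫ s in Set.Ioo (0:ℝ) 1, ‖g s‖ with hMdef
  set E : ℝ := ∫ s in Set.Ioo (0:ℝ) 1, ‖g s‖ ^ 2 with hEdef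
  have hgnInt : IntegrableOn (fun s => ‖g s‖) (Set.Ioo 0 1) :=
    (hgc.norm.integrableOn_Icc).mono_set Set.Ioo_subset_Icc_self
  have hg2Int : IntegrableOn (fun s => ‖g s‖ ^ 2) (Set.Ioo 0 1) :=
    ((hgc.norm.pow 2).integrableOn_Icc).mono_set Set.Ioo_subset_Icc_self
  have hM0 : 0 ≤ M := integral_nonneg fun s => norm_nonneg _
  have hM2E : M ^ 2 ≤ E := sq_setIntegral_le_aux hgnInt hg2Int
  -- u₂ is the integral of its derivative
  have hu_eq : ∀ ρ ∈ Set.Icc (0:ℝ) 1, u₂ ρ = ∫ s in (0:ℝ)..ρ, g s := by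
    intro ρ hρ
    have hderiv : ∀ x ∈ Set.Ioo (0:ℝ) ρ, HasDerivWithinAt u₂ (g x) (Set.Ioi x) x := by
      intro x hx
      have hx1 : x < 1 := lt_of_lt_of_le hx.2 hρ.2
      have hx' : x ∈ Set.Icc (0:ℝ) 1 := ⟨hx.1.le, hx1.le⟩
      have hmem : Set.Icc (0:ℝ) 1 ∈ nhds x := Icc_mem_nhds hx.1 hx1
      have hd : HasDerivWithinAt u₂ (g x) (Set.Icc 0 1) x :=
        ((hu.differentiableOn one_ne_zero) x hx').hasDerivWithinAt
      exact (hd.hasDerivAt hmem).hasDerivWithinAt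
    have hint : IntervalIntegrable g volume 0 ρ :=
      (hgc.mono (Set.Icc_subset_Icc le_rfl hρ.2)).intervalIntegrable_of_Icc hρ.1
    have := intervalIntegral.integral_eq_sub_of_hasDeriv_right_of_le hρ.1
      (huc.mono (Set.Icc_subset_Icc le_rfl hρ.2)) hderiv hint
    rw [h0, sub_zero] at this
    exact this.symm
  -- uniform bound on u₂
  have hubd : ∀ ρ ∈ Set.Icc (0:ℝ) 1, ‖u₂ ρ‖ ≤ M := by
    intro ρ hρ
    rw [hu_eq ρ hρ]
    have h1 : ‖∫ s in (0:ℝ)..ρ, g s‖ ≤ ∫ s in (0:ℝ)..ρ, ‖g s‖ :=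
      intervalIntegral.norm_integral_le_integral_norm hρ.1
    have h2 : (∫ s in (0:ℝ)..ρ, ‖g s‖) ≤ M := by
      rw [intervalIntegral.integral_of_le hρ.1, integral_Ioc_eq_integral_Ioo]
      exact setIntegral_mono_set hgnInt
        (Filter.Eventually.of_forall fun x => norm_nonneg _)
        ((Set.Ioo_subset_Ioo le_rfl hρ.2).eventuallyLE)
    linarith
  -- bound on F
  have hFbd : ∀ ρ ∈ Set.Icc (0:ℝ) 1,
      ‖∫ s in (0:ℝ)..ρ, (s:ℂ) * u₂ s‖ ≤ ρ ^ 2 / 2 * M := by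
    intro ρ hρ
    have hb : ∀ᵐ t : ℝ ∂volume.restrict (Set.uIoc (0:ℝ) ρ), ‖(t:ℂ) * u₂ t‖ ≤ t * M := by
      rw [Set.uIoc_of_le hρ.1]
      refine (ae_restrict_iff' measurableSet_Ioc).2 (Filter.Eventually.of_forall ?_)
      intro t ht
      have ht' : t ∈ Set.Icc (0:ℝ) 1 := ⟨ht.1.le, le_trans ht.2 hρ.2⟩
      rw [norm_mul, Complex.norm_real, Real.norm_eq_abs, abs_of_pos ht.1]
      exact mul_le_mul_of_nonneg_left (hubd t ht') ht.1.le
    have h1 : ‖∫ s in (0:ℝ)..ρ, (s:ℂ) * u₂ s‖ ≤ |∫ t in (0:ℝ)..ρ, t * M| :=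
      intervalIntegral.norm_integral_le_abs_of_norm_le hb
        ((continuous_id.mul continuous_const).intervalIntegrable 0 ρ)
    have h2 : (∫ t in (0:ℝ)..ρ, t * M) = ρ ^ 2 / 2 * M := by
      rw [intervalIntegral.integral_mul_const, integral_id]
      ring
    rw [h2, abs_of_nonneg (mul_nonneg (by positivity) hM0)] at h1
    exact h1
  -- derivative of V₁
  have hVd : ∀ ρ : ℝ, HasDerivAt V₁
      ((0 * (1 + ρ ^ 2) ^ 2 - (-16) * (2 * (1 + ρ ^ 2) ^ 1 * (2 * ρ))) / ((1 + ρ ^ 2) ^ 2) ^ 2)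
      ρ := by
    intro ρ
    have h1 : HasDerivAt (fun x : ℝ => 1 + x ^ 2) (2 * ρ) ρ := by
      simpa using (hasDerivAt_pow 2 ρ).const_add 1
    have h2 : HasDerivAt (fun x : ℝ => (1 + x ^ 2) ^ 2)
        (2 * (1 + ρ ^ 2) ^ 1 * (2 * ρ)) ρ := by
      simpa [Pi.pow_def] using h1.pow 2
    have hne : ((1 : ℝ) + ρ ^ 2) ^ 2 ≠ 0 := by positivity
    exact (hasDerivAt_const ρ (-16 : ℝ)).div h2 hne
  have hVdbd : ∀ ρ ∈ Set.Icc (0:ℝ) 1,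
      |(0 * (1 + ρ ^ 2) ^ 2 - (-16) * (2 * (1 + ρ ^ 2) ^ 1 * (2 * ρ))) / ((1 + ρ ^ 2) ^ 2) ^ 2|
        ≤ 64 := by
    intro ρ hρ
    have e1 : (1:ℝ) ≤ 1 + ρ ^ 2 := by nlinarith [sq_nonneg ρ]
    have e2 : (1:ℝ) ≤ (1 + ρ ^ 2) ^ 2 := by nlinarith
    have hd : (1:ℝ) ≤ ((1 + ρ ^ 2) ^ 2) ^ 2 := by nlinarith
    have hnum : (0:ℝ) ≤ 0 * (1 + ρ ^ 2) ^ 2 - (-16) * (2 * (1 + ρ ^ 2) ^ 1 * (2 * ρ)) := by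
      nlinarith [hρ.1, sq_nonneg ρ]
    rw [abs_of_nonneg (div_nonneg hnum (by positivity))]
    rw [div_le_iff₀ (by positivity)]
    nlinarith [hρ.1, hρ.2, sq_nonneg ρ, sq_nonneg (ρ^2)]
  have hVbd : ∀ ρ ∈ Set.Icc (0:ℝ) 1, |V₁ ρ| ≤ 16 := by
    intro ρ hρ
    have e1 : (1:ℝ) ≤ 1 + ρ ^ 2 := by nlinarith [sq_nonneg ρ]
    have hd : (1:ℝ) ≤ (1 + ρ ^ 2) ^ 2 := by nlinarith
    rw [V₁, abs_div, abs_of_nonneg (by positivity : (0:ℝ) ≤ (1 + ρ ^ 2) ^ 2)]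
    rw [div_le_iff₀ (by positivity)]
    rw [abs_neg, abs_of_nonneg (by norm_num : (0:ℝ) ≤ (16:ℝ))]
    nlinarith
  -- derivative of the product
  set G : ℝ → ℂ := fun x : ℝ => ((V₁ x : ℝ) : ℂ) * ∫ s in (0:ℝ)..x, (s:ℂ) * u₂ s with hGdef
  have hcont_int : ContinuousOn (fun s : ℝ => (s:ℂ) * u₂ s) (Set.Icc 0 1) :=
    (Complex.continuous_ofReal.continuousOn).mul huc
  have hGd : ∀ ρ ∈ Set.Ioo (0:ℝ) 1, HasDerivAt G
      ((((0 * (1 + ρ ^ 2) ^ 2 - (-16) * (2 * (1 + ρ ^ 2) ^ 1 * (2 * ρ)))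
          / ((1 + ρ ^ 2) ^ 2) ^ 2 : ℝ) : ℂ) * (∫ s in (0:ℝ)..ρ, (s:ℂ) * u₂ s)
        + ((V₁ ρ : ℝ) : ℂ) * ((ρ:ℂ) * u₂ ρ)) ρ := by
    intro ρ hρ
    have hρ' : ρ ∈ Set.Icc (0:ℝ) 1 := ⟨hρ.1.le, hρ.2.le⟩
    have hmem : Set.Icc (0:ℝ) 1 ∈ nhds ρ := Icc_mem_nhds hρ.1 hρ.2
    have hFd : HasDerivAt (fun x : ℝ => ∫ s in (0:ℝ)..x, (s:ℂ) * u₂ s) ((ρ:ℂ) * u₂ ρ) ρ := by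
      refine intervalIntegral.integral_hasDerivAt_right
        ((hcont_int.mono (Set.Icc_subset_Icc le_rfl hρ.2.le)).intervalIntegrable_of_Icc hρ.1.le)
        ?_ ?_
      · exact (hcont_int.mono Set.Ioo_subset_Icc_self).stronglyMeasurableAtFilter
          isOpen_Ioo ρ hρ
      · exact hcont_int.continuousAt hmem
    exact ((hVd ρ).ofReal_comp).mul hFd
  -- pointwise bound on the integrand
  have hpt : ∀ ρ ∈ Set.Ioo (0:ℝ) 1, ‖deriv G ρ‖ ^ 2 / ρ ^ 2 ≤ 2304 * M ^ 2 := by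
    intro ρ hρ
    have hρ' : ρ ∈ Set.Icc (0:ℝ) 1 := ⟨hρ.1.le, hρ.2.le⟩
    have hder := (hGd ρ hρ).deriv
    have hnbd : ‖deriv G ρ‖ ≤ 48 * (ρ * M) := by
      rw [hder]
      have h1 : ‖(((0 * (1 + ρ ^ 2) ^ 2 - (-16) * (2 * (1 + ρ ^ 2) ^ 1 * (2 * ρ)))
          / ((1 + ρ ^ 2) ^ 2) ^ 2 : ℝ) : ℂ) * (∫ s in (0:ℝ)..ρ, (s:ℂ) * u₂ s)‖
          ≤ 64 * (ρ ^ 2 / 2 * M) := by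
        rw [norm_mul, Complex.norm_real, Real.norm_eq_abs]
        exact mul_le_mul (hVdbd ρ hρ') (hFbd ρ hρ') (norm_nonneg _) (by norm_num)
      have h2 : ‖((V₁ ρ : ℝ) : ℂ) * ((ρ:ℂ) * u₂ ρ)‖ ≤ 16 * (ρ * M) := by
        rw [norm_mul, norm_mul, Complex.norm_real, Complex.norm_real, Real.norm_eq_abs,
          Real.norm_eq_abs, abs_of_pos hρ.1]
        have : ρ * ‖u₂ ρ‖ ≤ ρ * M := mul_le_mul_of_nonneg_left (hubd ρ hρ') hρ.1.le
        calc |V₁ ρ| * (ρ * ‖u₂ ρ‖) ≤ 16 * (ρ * ‖u₂ ρ‖) :=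
              mul_le_mul_of_nonneg_right (hVbd ρ hρ')
                (mul_nonneg hρ.1.le (norm_nonneg _))
          _ ≤ 16 * (ρ * M) := by nlinarith
      have h3 := norm_add_le _ _ |>.trans (add_le_add h1 h2)
      have hρ2 : ρ ^ 2 ≤ ρ := by nlinarith [hρ.1, hρ.2]
      calc ‖_ + _‖ ≤ 64 * (ρ ^ 2 / 2 * M) + 16 * (ρ * M) := h3
        _ ≤ 48 * (ρ * M) := by nlinarith
    rw [div_le_iff₀ (pow_pos hρ.1 2)]
    have := pow_le_pow_left₀ (norm_nonneg _) hnbd 2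
    nlinarith [this]
  -- measurability of the integrand
  have hmeasφ : Measurable (fun ρ : ℝ => ‖deriv G ρ‖ ^ 2 / ρ ^ 2) :=
    ((measurable_deriv G).norm.pow_const 2).div (measurable_id.pow_const 2)
  have hconstInt : IntegrableOn (fun _ : ℝ => 2304 * M ^ 2) (Set.Ioo (0:ℝ) 1) := by
    refine integrableOn_const ?_
    rw [Real.volume_Ioo]; norm_num
  have hInt : IntegrableOn (fun ρ : ℝ => ‖deriv G ρ‖ ^ 2 / ρ ^ 2) (Set.Ioo 0 1) := by
    refine Integrable.mono' hconstInt hmeasφ.aestronglyMeasurable ?_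
    refine (ae_restrict_iff' measurableSet_Ioo).2 (Filter.Eventually.of_forall ?_)
    intro ρ hρ
    rw [Real.norm_eq_abs, abs_of_nonneg (div_nonneg (by positivity) (sq_nonneg _))]
    exact hpt ρ hρ
  refine ⟨hInt, ?_⟩
  have hfinal : (∫ ρ in Set.Ioo (0:ℝ) 1, ‖deriv G ρ‖ ^ 2 / ρ ^ 2)
      ≤ ∫ _ρ in Set.Ioo (0:ℝ) 1, 2304 * M ^ 2 :=
    setIntegral_mono_on hInt hconstInt measurableSet_Ioo hpt
  have hconstval : (∫ _ρ in Set.Ioo (0:ℝ) 1, 2304 * M ^ 2) = 2304 * M ^ 2 := by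
    rw [setIntegral_const, Real.volume_real_Ioo]
    norm_num
  calc (∫ ρ in Set.Ioo (0:ℝ) 1, ‖deriv G ρ‖ ^ 2 / ρ ^ 2)
      ≤ 2304 * M ^ 2 := by rw [← hconstval]; exact hfinal
    _ ≤ 2304 * E := by nlinarith
end

section
/- Let u₁ ∈ C³[0,1] be complex-valued with u₁(0) = u₁'(0) = u₁''(0) = 0 and let u₂ ∈ C³[0,1] be complex-valued with u₂(0) = 0. Define v₁(ρ) := −ρu₁'(ρ) + u₁(ρ) + ρu₂'(ρ) − u₂(ρ) and v₂(ρ) := u₁'(ρ)/ρ − ρu₂'(ρ). Then Re[ ∫₀¹ v₁'(ρ) conj(u₁'(ρ)) ρ^{-2} dρ + ∫₀¹ v₂'(ρ) conj(u₂'(ρ)) dρ ] ≤ −(1/2) [ ∫₀¹ |u₁'(ρ)|² ρ^{-2} dρ + ∫₀¹ |u₂'(ρ)|² dρ ]. -/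
open MeasureTheory Set Complex

lemma integrableOn_of_bdd {E : Type*} [NormedAddCommGroup E] {h : ℝ → E} {C : ℝ}
    (hc : ContinuousOn h (Ioo 0 1)) (hb : ∀ x ∈ Ioo (0:ℝ) 1, ‖h x‖ ≤ C) :
    IntegrableOn h (Ioo 0 1) := by
  refine ⟨hc.aestronglyMeasurable measurableSet_Ioo, ?_⟩
  refine HasFiniteIntegral.restrict_of_bounded (C := C) (by simp [Real.volume_Ioo]) ?_
  exact (ae_restrict_iff' measurableSet_Ioo).2 (Filter.Eventually.of_forall hb)

set_option maxHeartbeats 2000000 in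
lemma key (f g f' g' : ℝ → ℂ) (M : ℝ)
    (hfc : ContinuousOn f (Icc 0 1)) (hf'c : ContinuousOn f' (Icc 0 1))
    (hgc : ContinuousOn g (Icc 0 1)) (hg'c : ContinuousOn g' (Icc 0 1))
    (hfd : ∀ ρ ∈ Ioo (0:ℝ) 1, HasDerivAt f (f' ρ) ρ)
    (hgd : ∀ ρ ∈ Ioo (0:ℝ) 1, HasDerivAt g (g' ρ) ρ)
    (hfb : ∀ ρ ∈ Icc (0:ℝ) 1, ‖f ρ‖ ≤ M * ρ^2)
    (hf'b : ∀ ρ ∈ Icc (0:ℝ) 1, ‖f' ρ‖ ≤ M * ρ)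
    (hgb : ∀ ρ ∈ Icc (0:ℝ) 1, ‖g ρ‖ ≤ M)
    (hg'b : ∀ ρ ∈ Icc (0:ℝ) 1, ‖g' ρ‖ ≤ M) :
    ((∫ ρ in Ioo (0:ℝ) 1, (ρ:ℂ) * (g' ρ - f' ρ) * (starRingEnd ℂ) (f ρ) / (ρ:ℂ)^2)
      + ∫ ρ in Ioo (0:ℝ) 1,
          ((f' ρ * ρ - f ρ)/(ρ:ℂ)^2 - (g ρ + ρ * g' ρ)) * (starRingEnd ℂ) (g ρ)).re
    ≤ -(1/2) * ((∫ ρ in Ioo (0:ℝ) 1, ‖f ρ‖^2/ρ^2) + ∫ ρ in Ioo (0:ℝ) 1, ‖g ρ‖^2) := by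
  have hM0 : 0 ≤ M := le_trans (norm_nonneg _) (hgb 0 (by norm_num))
  have hf0 : f 0 = 0 := by
    have h0 : ‖f 0‖ ≤ 0 := by simpa using hfb 0 (by norm_num)
    exact norm_eq_zero.mp (le_antisymm h0 (norm_nonneg _))
  set A : ℝ → ℂ := fun ρ => (ρ:ℂ) * (g' ρ - f' ρ) * (starRingEnd ℂ) (f ρ) / (ρ:ℂ)^2 with hA
  set B : ℝ → ℂ := fun ρ =>
    ((f' ρ * ρ - f ρ)/(ρ:ℂ)^2 - (g ρ + ρ * g' ρ)) * (starRingEnd ℂ) (g ρ) with hB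
  set C : ℝ → ℝ := fun ρ => ‖f ρ‖^2/ρ^2 with hC
  set D : ℝ → ℝ := fun ρ => ‖g ρ‖^2 with hD
  set F : ℝ → ℝ := fun ρ =>
    (f ρ * (starRingEnd ℂ) (g ρ) / ρ - f ρ * (starRingEnd ℂ) (f ρ) / (2*(ρ:ℂ))
      - (ρ:ℂ) * (g ρ * (starRingEnd ℂ) (g ρ)) / 2).re with hF
  set E : ℝ → ℝ := fun ρ => (A ρ + B ρ).re + (C ρ + D ρ)/2 with hE
  -- derivative of F
  have hder : ∀ ρ ∈ Ioo (0:ℝ) 1, HasDerivAt F (E ρ) ρ := by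
    intro ρ hρ
    have hρ0 : ρ ≠ 0 := ne_of_gt hρ.1
    have hρC : (ρ:ℂ) ≠ 0 := Complex.ofReal_ne_zero.mpr hρ0
    have hr : HasDerivAt (fun x:ℝ => (x:ℂ)) 1 ρ := by
      simpa using (hasDerivAt_id ρ).ofReal_comp
    have hf' := hfd ρ hρ
    have hg' := hgd ρ hρ
    have h₁ : HasDerivAt (fun x : ℝ => f x * (starRingEnd ℂ) (g x) / (x:ℂ))
        (((f' ρ * (starRingEnd ℂ) (g ρ) + f ρ * (starRingEnd ℂ) (g' ρ)) * ρ
          - f ρ * (starRingEnd ℂ) (g ρ) * 1) / (ρ:ℂ)^2) ρ :=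
      (hf'.mul hg'.star).div hr hρC
    have h₂ : HasDerivAt (fun x : ℝ => f x * (starRingEnd ℂ) (f x) / (2*(x:ℂ)))
        (((f' ρ * (starRingEnd ℂ) (f ρ) + f ρ * (starRingEnd ℂ) (f' ρ)) * (2*ρ)
          - f ρ * (starRingEnd ℂ) (f ρ) * 2) / (2*(ρ:ℂ))^2) ρ := by
      have h2r : HasDerivAt (fun x:ℝ => 2*(x:ℂ)) 2 ρ := by
        simpa using hr.const_mul (2:ℂ)
      exact (hf'.mul hf'.star).div h2r (by simp [hρC])
    have h₃ : HasDerivAt (fun x : ℝ => (x:ℂ) * (g x * (starRingEnd ℂ) (g x)) / 2)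
        ((1 * (g ρ * (starRingEnd ℂ) (g ρ))
          + ρ * (g' ρ * (starRingEnd ℂ) (g ρ) + g ρ * (starRingEnd ℂ) (g' ρ))) / 2) ρ :=
      (hr.mul (hg'.mul hg'.star)).div_const 2
    have hG := (h₁.sub h₂).sub h₃
    have hFd := (Complex.reCLM.hasFDerivAt).comp_hasDerivAt ρ hG
    have heq : E ρ = Complex.reCLM
        ((((f' ρ * (starRingEnd ℂ) (g ρ) + f ρ * (starRingEnd ℂ) (g' ρ)) * ρ
          - f ρ * (starRingEnd ℂ) (g ρ) * 1) / (ρ:ℂ)^2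
        - ((f' ρ * (starRingEnd ℂ) (f ρ) + f ρ * (starRingEnd ℂ) (f' ρ)) * (2*ρ)
          - f ρ * (starRingEnd ℂ) (f ρ) * 2) / (2*(ρ:ℂ))^2)
        - (1 * (g ρ * (starRingEnd ℂ) (g ρ))
          + ρ * (g' ρ * (starRingEnd ℂ) (g ρ) + g ρ * (starRingEnd ℂ) (g' ρ))) / 2) := by
      have h2 : ((2:ℂ)).re = 2 := rfl
      have h2' : ((2:ℂ)).im = 0 := rfl
      have h4 : ((4:ℂ)).re = 4 := rfl
      have h4' : ((4:ℂ)).im = 0 := rfl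
      have h4b : (((2:ℂ))^2).re = 4 := by norm_num
      have h4b' : (((2:ℂ))^2).im = 0 := by norm_num
      simp only [hE, hA, hB, hC, hD, Complex.reCLM_apply, ← Complex.ofReal_pow, mul_pow,
        Complex.add_re, Complex.sub_re,
        Complex.mul_re, Complex.div_re, Complex.div_im, Complex.inv_re, Complex.inv_im,
        Complex.normSq_apply, Complex.conj_re, Complex.conj_im,
        Complex.ofReal_re, Complex.ofReal_im, Complex.one_re, Complex.one_im, Complex.mul_im,
        Complex.sq_norm, Complex.add_im, Complex.sub_im, h2, h2', h4, h4', h4b, h4b', Complex.re_ofNat, Complex.im_ofNat]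
      field_simp
      ring
    rw [heq]
    exact hFd
  have sub : Ioo (0:ℝ) 1 ⊆ Icc 0 1 := Ioo_subset_Icc_self
  have hF0 : F 0 = 0 := by simp [hF, hf0]
  -- continuity of F on [0,1]
  have hFcont : ContinuousOn F (Icc 0 1) := by
    intro x hx
    rcases eq_or_ne x 0 with rfl | hx0
    · have hb : ∀ ρ ∈ Icc (0:ℝ) 1, ‖F ρ‖ ≤ 3*M^2*ρ := by
        intro ρ hρ
        rcases eq_or_ne ρ 0 with rfl | hρ0
        · simp [hF0]
        have hρpos : 0 < ρ := lt_of_le_of_ne hρ.1 (Ne.symm hρ0)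
        have hb1 : ‖f ρ * (starRingEnd ℂ) (g ρ) / (ρ:ℂ)‖ ≤ M^2*ρ := by
          rw [norm_div, norm_mul, RCLike.norm_conj, Complex.norm_real, Real.norm_eq_abs,
            abs_of_pos hρpos]
          have : ‖f ρ‖ * ‖g ρ‖ / ρ ≤ (M*ρ^2) * M / ρ := by
            gcongr
            · exact hfb ρ hρ
            · exact hgb ρ hρ
          refine this.trans (le_of_eq ?_)
          field_simp
        have hb2 : ‖f ρ * (starRingEnd ℂ) (f ρ) / (2*(ρ:ℂ))‖ ≤ M^2*ρ := by
          rw [norm_div, norm_mul, RCLike.norm_conj, norm_mul, Complex.norm_real,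
            Real.norm_eq_abs, abs_of_pos hρpos]
          have h2n : ‖(2:ℂ)‖ = 2 := by norm_num
          rw [h2n, div_le_iff₀ (by positivity)]
          have hfρ := hfb ρ hρ
          have hr2 : ρ^2 ≤ 1 := by nlinarith [hρ.2]
          nlinarith [norm_nonneg (f ρ), hρ.2, mul_le_mul hfρ hfρ (norm_nonneg _) (by positivity : (0:ℝ) ≤ M*ρ^2), hr2, mul_nonneg (mul_nonneg hM0 hM0) (sq_nonneg ρ)]
        have hb3 : ‖(ρ:ℂ) * (g ρ * (starRingEnd ℂ) (g ρ)) / 2‖ ≤ M^2*ρ := by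
          rw [norm_div, norm_mul, norm_mul, RCLike.norm_conj, Complex.norm_real,
            Real.norm_eq_abs, abs_of_pos hρpos]
          have h2n : ‖(2:ℂ)‖ = 2 := by norm_num
          rw [h2n, div_le_iff₀ (by norm_num)]
          have hgρ := hgb ρ hρ
          nlinarith [norm_nonneg (g ρ), mul_le_mul hgρ hgρ (norm_nonneg _) hM0]
        calc ‖F ρ‖ ≤ ‖f ρ * (starRingEnd ℂ) (g ρ) / (ρ:ℂ) - f ρ * (starRingEnd ℂ) (f ρ) / (2*(ρ:ℂ))
              - (ρ:ℂ) * (g ρ * (starRingEnd ℂ) (g ρ)) / 2‖ := by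
              rw [hF, Real.norm_eq_abs]; exact Complex.abs_re_le_norm _
          _ ≤ ‖f ρ * (starRingEnd ℂ) (g ρ) / (ρ:ℂ)‖ + ‖f ρ * (starRingEnd ℂ) (f ρ) / (2*(ρ:ℂ))‖
              + ‖(ρ:ℂ) * (g ρ * (starRingEnd ℂ) (g ρ)) / 2‖ := by
              exact (norm_sub_le _ _).trans (add_le_add_left (norm_sub_le _ _) _)
          _ ≤ M^2*ρ + M^2*ρ + M^2*ρ := by gcongr
          _ = 3*M^2*ρ := by ring
      have htend : Filter.Tendsto (fun ρ : ℝ => 3*M^2*ρ) (nhdsWithin 0 (Icc 0 1)) (nhds 0) := by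
        have : Filter.Tendsto (fun ρ : ℝ => 3*M^2*ρ) (nhds 0) (nhds (3*M^2*0)) :=
          (continuous_const.mul continuous_id).tendsto 0
        rw [mul_zero] at this
        exact tendsto_nhdsWithin_of_tendsto_nhds this
      have : Filter.Tendsto F (nhdsWithin 0 (Icc 0 1)) (nhds 0) := by
        apply squeeze_zero_norm' _ htend
        exact eventually_mem_nhdsWithin.mono (fun ρ hρ => hb ρ hρ)
      rw [ContinuousWithinAt, hF0]
      exact this
    · have hxC : (x:ℂ) ≠ 0 := Complex.ofReal_ne_zero.mpr hx0
      have c1 := hfc x hx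
      have c2 := hgc x hx
      have cconj1 : ContinuousWithinAt (fun y => (starRingEnd ℂ) (f y)) (Icc 0 1) x :=
        Complex.continuous_conj.continuousAt.comp_continuousWithinAt c1
      have cconj2 : ContinuousWithinAt (fun y => (starRingEnd ℂ) (g y)) (Icc 0 1) x :=
        Complex.continuous_conj.continuousAt.comp_continuousWithinAt c2
      have cr : ContinuousWithinAt (fun y : ℝ => (y:ℂ)) (Icc 0 1) x :=
        Complex.continuous_ofReal.continuousWithinAt
      exact Complex.continuous_re.continuousAt.comp_continuousWithinAt
        ((((c1.mul cconj2).div cr hxC).sub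
          ((c1.mul cconj1).div ((continuous_const.mul Complex.continuous_ofReal).continuousWithinAt)
            (by simpa using hxC))).sub
          ((cr.mul (c2.mul cconj2)).div_const 2))
  -- integrability
  have hρC' : ∀ x ∈ Ioo (0:ℝ) 1, ((x:ℂ))^2 ≠ 0 :=
    fun x hx => pow_ne_zero 2 (Complex.ofReal_ne_zero.mpr (ne_of_gt hx.1))
  have iA : IntegrableOn A (Ioo 0 1) := by
    apply integrableOn_of_bdd (C := 2*M^2)
    · exact ((Complex.continuous_ofReal.continuousOn.mul ((hg'c.mono sub).sub (hf'c.mono sub))).mul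
        (Complex.continuous_conj.comp_continuousOn (hfc.mono sub))).div
        ((Complex.continuous_ofReal.pow 2).continuousOn) hρC'
    · intro ρ hρ
      have hρpos : 0 < ρ := hρ.1
      have hcalc : ‖A ρ‖ = ρ * ‖g' ρ - f' ρ‖ * ‖f ρ‖ / ρ^2 := by
        rw [hA]
        rw [norm_div, norm_mul, norm_mul, RCLike.norm_conj, norm_pow, Complex.norm_real,
          Real.norm_eq_abs, abs_of_pos hρpos]
      rw [hcalc]
      have h1 : ‖g' ρ - f' ρ‖ ≤ M + M := by
        refine (norm_sub_le _ _).trans (add_le_add (hg'b ρ (sub hρ)) ?_)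
        exact (hf'b ρ (sub hρ)).trans (by nlinarith [hρ.2.le, hρpos.le])
      have : ρ * ‖g' ρ - f' ρ‖ * ‖f ρ‖ / ρ^2 ≤ ρ * (M+M) * (M*ρ^2) / ρ^2 := by
        gcongr
        exact hfb ρ (sub hρ)
      refine this.trans ?_
      rw [div_le_iff₀ (by positivity)]
      nlinarith [hρ.2.le, hρpos.le, hM0, sq_nonneg ρ, mul_nonneg (mul_nonneg hM0 hM0) (sq_nonneg ρ)]
  have iB : IntegrableOn B (Ioo 0 1) := by
    apply integrableOn_of_bdd (C := 4*M^2)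
    · exact (((((hf'c.mono sub).mul Complex.continuous_ofReal.continuousOn).sub (hfc.mono sub)).div
        ((Complex.continuous_ofReal.pow 2).continuousOn) hρC').sub
        ((hgc.mono sub).add (Complex.continuous_ofReal.continuousOn.mul (hg'c.mono sub)))).mul
        (Complex.continuous_conj.comp_continuousOn (hgc.mono sub))
    · intro ρ hρ
      have hρpos : 0 < ρ := hρ.1
      have e1 : ‖(f' ρ * ρ - f ρ)/(ρ:ℂ)^2‖ ≤ 2*M := by
        rw [norm_div, norm_pow, Complex.norm_real, Real.norm_eq_abs, abs_of_pos hρpos,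
          div_le_iff₀ (by positivity)]
        have : ‖f' ρ * ρ - f ρ‖ ≤ ‖f' ρ‖ * ρ + ‖f ρ‖ := by
          refine (norm_sub_le _ _).trans ?_
          rw [norm_mul, Complex.norm_real, Real.norm_eq_abs, abs_of_pos hρpos]
        refine this.trans ?_
        have := hf'b ρ (sub hρ); have := hfb ρ (sub hρ)
        nlinarith [hρpos.le]
      have e2 : ‖g ρ + ρ * g' ρ‖ ≤ 2*M := by
        refine (norm_add_le _ _).trans ?_
        rw [norm_mul, Complex.norm_real, Real.norm_eq_abs, abs_of_pos hρpos]
        have := hgb ρ (sub hρ); have := hg'b ρ (sub hρ)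
        nlinarith [hρ.2.le, hρpos.le, norm_nonneg (g' ρ)]
      have : ‖B ρ‖ = ‖(f' ρ * ρ - f ρ)/(ρ:ℂ)^2 - (g ρ + ρ * g' ρ)‖ * ‖g ρ‖ := by
        rw [hB, norm_mul, RCLike.norm_conj]
      rw [this]
      have e3 : ‖(f' ρ * ρ - f ρ)/(ρ:ℂ)^2 - (g ρ + ρ * g' ρ)‖ ≤ 4*M := by
        refine (norm_sub_le _ _).trans ?_
        linarith
      calc ‖(f' ρ * ρ - f ρ)/(ρ:ℂ)^2 - (g ρ + ρ * g' ρ)‖ * ‖g ρ‖ ≤ (4*M) * M :=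
            mul_le_mul e3 (hgb ρ (sub hρ)) (norm_nonneg _) (by positivity)
        _ = 4*M^2 := by ring
  have iC : IntegrableOn C (Ioo 0 1) := by
    apply integrableOn_of_bdd (C := M^2)
    · exact (((hfc.mono sub).norm.pow 2)).div (continuousOn_pow 2)
        (fun x hx => pow_ne_zero 2 (ne_of_gt hx.1))
    · intro ρ hρ
      have hρpos : 0 < ρ := hρ.1
      have hfρ := hfb ρ (sub hρ)
      show |‖f ρ‖^2/ρ^2| ≤ M^2
      rw [_root_.abs_of_nonneg (show (0:ℝ) ≤ ‖f ρ‖^2/ρ^2 by positivity), div_le_iff₀ (by positivity : (0:ℝ) < ρ^2)]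
      have hr2 : ρ^2 ≤ 1 := by nlinarith [hρ.2]
      nlinarith [hρ.2.le, hρpos.le, norm_nonneg (f ρ), mul_le_mul hfρ hfρ (norm_nonneg _) (by positivity : (0:ℝ) ≤ M*ρ^2), hr2, mul_nonneg (mul_nonneg hM0 hM0) (sq_nonneg ρ)]
  have iD : IntegrableOn D (Ioo 0 1) := by
    apply integrableOn_of_bdd (C := M^2)
    · exact ((hgc.mono sub).norm.pow 2)
    · intro ρ hρ
      have hgρ := hgb ρ (sub hρ)
      show |‖g ρ‖^2| ≤ M^2
      rw [_root_.abs_of_nonneg (show (0:ℝ) ≤ ‖g ρ‖^2 by positivity)]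
      nlinarith [norm_nonneg (g ρ)]
  have iAB : IntegrableOn (fun ρ => A ρ + B ρ) (Ioo 0 1) := iA.add iB
  have iE : IntegrableOn E (Ioo 0 1) := by
    refine Integrable.add ?_ ?_
    · exact iAB.re
    · exact (iC.add iD).div_const 2
  -- FTC
  have hInt : IntervalIntegrable E volume 0 1 := by
    rw [intervalIntegrable_iff, Set.uIoc_of_le (by norm_num : (0:ℝ) ≤ 1)]
    exact iE.congr_set_ae Ioo_ae_eq_Ioc.symm
  have hFTC := intervalIntegral.integral_eq_sub_of_hasDeriv_right_of_le
    (by norm_num : (0:ℝ) ≤ 1) hFcont (fun x hx => (hder x hx).hasDerivWithinAt) hInt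
  have hIE : ∫ ρ in Ioo (0:ℝ) 1, E ρ = F 1 := by
    rw [← MeasureTheory.integral_Ioc_eq_integral_Ioo,
      ← intervalIntegral.integral_of_le (by norm_num : (0:ℝ) ≤ 1), hFTC, hF0, sub_zero]
  -- split the integral
  have hsplit : ∫ ρ in Ioo (0:ℝ) 1, E ρ =
      ((∫ ρ in Ioo (0:ℝ) 1, A ρ) + ∫ ρ in Ioo (0:ℝ) 1, B ρ).re
        + ((∫ ρ in Ioo (0:ℝ) 1, C ρ) + ∫ ρ in Ioo (0:ℝ) 1, D ρ)/2 := by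
    have iABre : Integrable (fun ρ => (A ρ + B ρ).re) (volume.restrict (Ioo 0 1)) := iAB.re
    have iCD2 : Integrable (fun ρ => (C ρ + D ρ)/2) (volume.restrict (Ioo 0 1)) :=
      Integrable.div_const (iC.add iD) 2
    have hre : ∫ ρ in Ioo (0:ℝ) 1, (A ρ + B ρ).re
        = ((∫ ρ in Ioo (0:ℝ) 1, A ρ) + ∫ ρ in Ioo (0:ℝ) 1, B ρ).re := by
      rw [← integral_add iA iB]; exact integral_re iAB
    simp only [hE]
    rw [integral_add iABre iCD2]
    rw [hre]
    rw [integral_div]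
    rw [integral_add iC iD]
  -- F 1 ≤ 0
  have hF1 : F 1 ≤ 0 := by
    show (f 1 * (starRingEnd ℂ) (g 1) / ((1:ℝ):ℂ) - f 1 * (starRingEnd ℂ) (f 1)/(2*((1:ℝ):ℂ))
      - ((1:ℝ):ℂ)*(g 1 * (starRingEnd ℂ) (g 1))/2).re ≤ 0
    have e0 : ((1:ℝ):ℂ) = 1 := Complex.ofReal_one
    rw [e0, div_one, mul_one, one_mul, Complex.sub_re, Complex.sub_re]
    have e1 : (f 1 * (starRingEnd ℂ) (f 1) / 2).re = ‖f 1‖^2/2 := by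
      rw [Complex.mul_conj]; simp [Complex.normSq_eq_norm_sq, ← Complex.ofReal_pow]
    have e2 : (g 1 * (starRingEnd ℂ) (g 1) / 2).re = ‖g 1‖^2/2 := by
      rw [Complex.mul_conj]; simp [Complex.normSq_eq_norm_sq, ← Complex.ofReal_pow]
    have e3 : (f 1 * (starRingEnd ℂ) (g 1)).re ≤ ‖f 1‖ * ‖g 1‖ := by
      refine (Complex.re_le_norm _).trans ?_
      rw [norm_mul]
      simp
    rw [e1, e2]
    nlinarith [sq_nonneg (‖f 1‖ - ‖g 1‖)]
  have hfinal := hIE ▸ hsplit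
  linarith [hfinal ▸ hF1]

set_option maxHeartbeats 1000000 in
/-- dissipativity of the free operator: for `u₁ ∈ C³[0,1]` with
`u₁(0)=u₁'(0)=u₁''(0)=0` and `u₂ ∈ C³[0,1]` with `u₂(0)=0`, setting
`v₁ = −ρu₁'+u₁+ρu₂'−u₂` and `v₂ = u₁'/ρ − ρu₂'`, one has
`Re[∫₀¹ v₁' conj(u₁') ρ^{-2} dρ + ∫₀¹ v₂' conj(u₂') dρ]
  ≤ −(1/2)[∫₀¹ |u₁'|² ρ^{-2} dρ + ∫₀¹ |u₂'|² dρ]`. -/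
theorem stmt_9 (u₁ u₂ : ℝ → ℂ)
    (h1 : ContDiffOn ℝ 3 u₁ (Set.Icc 0 1))
    (h10 : u₁ 0 = 0) (h11 : dI u₁ 0 = 0) (h12 : dI (dI u₁) 0 = 0)
    (h2 : ContDiffOn ℝ 3 u₂ (Set.Icc 0 1)) (h20 : u₂ 0 = 0) :
    ((∫ ρ in Set.Ioo (0:ℝ) 1,
        dI (fun x : ℝ => -(x:ℂ) * dI u₁ x + u₁ x + (x:ℂ) * dI u₂ x - u₂ x) ρ
          * (starRingEnd ℂ) (dI u₁ ρ) / (ρ:ℂ) ^ 2)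
      + ∫ ρ in Set.Ioo (0:ℝ) 1,
        dI (fun x : ℝ => dI u₁ x / (x:ℂ) - (x:ℂ) * dI u₂ x) ρ
          * (starRingEnd ℂ) (dI u₂ ρ)).re
    ≤ -(1/2) * ((∫ ρ in Set.Ioo (0:ℝ) 1, ‖dI u₁ ρ‖ ^ 2 / ρ ^ 2)
      + ∫ ρ in Set.Ioo (0:ℝ) 1, ‖dI u₂ ρ‖ ^ 2) := by
  have uD : UniqueDiffOn ℝ (Icc (0:ℝ) 1) := uniqueDiffOn_Icc one_pos
  have hf2 : ContDiffOn ℝ 2 (dI u₁) (Icc 0 1) := h1.derivWithin uD (by norm_num)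
  have hf'1 : ContDiffOn ℝ 1 (dI (dI u₁)) (Icc 0 1) := hf2.derivWithin uD (by norm_num)
  have hf''c : ContinuousOn (dI (dI (dI u₁))) (Icc 0 1) :=
    (ContDiffOn.derivWithin (m := 0) hf'1 uD (by norm_num)).continuousOn
  have hg2 : ContDiffOn ℝ 2 (dI u₂) (Icc 0 1) := h2.derivWithin uD (by norm_num)
  have hg'1 : ContDiffOn ℝ 1 (dI (dI u₂)) (Icc 0 1) := hg2.derivWithin uD (by norm_num)
  have hfc : ContinuousOn (dI u₁) (Icc 0 1) := hf2.continuousOn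
  have hf'c : ContinuousOn (dI (dI u₁)) (Icc 0 1) := hf'1.continuousOn
  have hgc : ContinuousOn (dI u₂) (Icc 0 1) := hg2.continuousOn
  have hg'c : ContinuousOn (dI (dI u₂)) (Icc 0 1) := hg'1.continuousOn
  -- generic derivative transfer
  have deriv_at : ∀ (h : ℝ → ℂ), ContDiffOn ℝ 1 h (Icc 0 1) →
      ∀ ρ ∈ Ioo (0:ℝ) 1, HasDerivAt h (derivWithin h (Icc 0 1) ρ) ρ := by
    intro h hh ρ hρ
    have hmem : Icc (0:ℝ) 1 ∈ nhds ρ := Icc_mem_nhds hρ.1 hρ.2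
    have hd : DifferentiableWithinAt ℝ h (Icc 0 1) ρ :=
      (hh.differentiableOn (by norm_num)) ρ (Ioo_subset_Icc_self hρ)
    rw [derivWithin_of_mem_nhds hmem]
    exact (hd.differentiableAt hmem).hasDerivAt
  have hfd : ∀ ρ ∈ Ioo (0:ℝ) 1, HasDerivAt (dI u₁) (dI (dI u₁) ρ) ρ :=
    deriv_at _ (hf2.of_le (by norm_num))
  have hgd : ∀ ρ ∈ Ioo (0:ℝ) 1, HasDerivAt (dI u₂) (dI (dI u₂) ρ) ρ :=
    deriv_at _ (hg2.of_le (by norm_num))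
  have hu₁d : ∀ ρ ∈ Ioo (0:ℝ) 1, HasDerivAt u₁ (dI u₁ ρ) ρ :=
    deriv_at _ (h1.of_le (by norm_num))
  have hu₂d : ∀ ρ ∈ Ioo (0:ℝ) 1, HasDerivAt u₂ (dI u₂ ρ) ρ :=
    deriv_at _ (h2.of_le (by norm_num))
  -- global bound
  obtain ⟨M, hM⟩ := isCompact_Icc.exists_bound_of_continuousOn
    (((((hfc.norm.add hf'c.norm).add hf''c.norm).add hgc.norm).add hg'c.norm) :
      ContinuousOn (fun x => ‖dI u₁ x‖ + ‖dI (dI u₁) x‖ + ‖dI (dI (dI u₁)) x‖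
        + ‖dI u₂ x‖ + ‖dI (dI u₂) x‖) (Icc 0 1))
  have hbAll : ∀ ρ ∈ Icc (0:ℝ) 1, ‖dI u₁ ρ‖ ≤ M ∧ ‖dI (dI u₁) ρ‖ ≤ M
      ∧ ‖dI (dI (dI u₁)) ρ‖ ≤ M ∧ ‖dI u₂ ρ‖ ≤ M ∧ ‖dI (dI u₂) ρ‖ ≤ M := by
    intro ρ hρ
    have hb := hM ρ hρ
    rw [Real.norm_eq_abs] at hb; replace hb := (le_abs_self _).trans hb; simp only [Pi.add_apply] at hb
    refine ⟨?_, ?_, ?_, ?_, ?_⟩ <;>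
      nlinarith [norm_nonneg (dI u₁ ρ), norm_nonneg (dI (dI u₁) ρ),
        norm_nonneg (dI (dI (dI u₁)) ρ), norm_nonneg (dI u₂ ρ), norm_nonneg (dI (dI u₂) ρ)]
  -- MVT bounds
  have hf'b : ∀ ρ ∈ Icc (0:ℝ) 1, ‖dI (dI u₁) ρ‖ ≤ M * ρ := by
    intro ρ hρ
    have := Convex.norm_image_sub_le_of_norm_hasDerivWithin_le
      (f := dI (dI u₁)) (f' := dI (dI (dI u₁))) (s := Icc (0:ℝ) 1) (C := M)
      (fun x hx => (hf'1.differentiableOn (by norm_num) x hx).hasDerivWithinAt)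
      (fun x hx => (hbAll x hx).2.2.1) (convex_Icc 0 1) (show (0:ℝ) ∈ Icc (0:ℝ) 1 by norm_num) hρ
    rw [h12, sub_zero, sub_zero, Real.norm_eq_abs, _root_.abs_of_nonneg hρ.1] at this
    exact this
  have hM0 : 0 ≤ M := le_trans (norm_nonneg _) (hM 0 (by norm_num))
  have hfb : ∀ ρ ∈ Icc (0:ℝ) 1, ‖dI u₁ ρ‖ ≤ M * ρ^2 := by
    intro ρ hρ
    have hsub : Icc (0:ℝ) ρ ⊆ Icc 0 1 := Icc_subset_Icc_right hρ.2
    have hbd : ∀ x ∈ Icc (0:ℝ) ρ, ‖dI (dI u₁) x‖ ≤ M * ρ :=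
      fun x hx => (hf'b x (hsub hx)).trans (mul_le_mul_of_nonneg_left hx.2 hM0)
    have := Convex.norm_image_sub_le_of_norm_hasDerivWithin_le
      (f := dI u₁) (f' := dI (dI u₁)) (s := Icc (0:ℝ) ρ) (C := M * ρ)
      (fun x hx => ((hf2.differentiableOn (by norm_num) x (hsub hx)).hasDerivWithinAt).mono hsub)
      hbd
      (convex_Icc 0 ρ) (left_mem_Icc.mpr hρ.1) (right_mem_Icc.mpr hρ.1)
    rw [h11, sub_zero, sub_zero, Real.norm_eq_abs, _root_.abs_of_nonneg hρ.1] at this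
    exact this.trans (by nlinarith [hρ.1])
  -- rewrite the two dI-integrands on Ioo
  have hcongr1 : ∫ ρ in Ioo (0:ℝ) 1,
      dI (fun x : ℝ => -(x:ℂ) * dI u₁ x + u₁ x + (x:ℂ) * dI u₂ x - u₂ x) ρ
        * (starRingEnd ℂ) (dI u₁ ρ) / (ρ:ℂ) ^ 2
      = ∫ ρ in Ioo (0:ℝ) 1,
        (ρ:ℂ) * (dI (dI u₂) ρ - dI (dI u₁) ρ) * (starRingEnd ℂ) (dI u₁ ρ) / (ρ:ℂ)^2 := by
    refine setIntegral_congr_fun measurableSet_Ioo (fun ρ hρ => ?_)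
    have hmem : Icc (0:ℝ) 1 ∈ nhds ρ := Icc_mem_nhds hρ.1 hρ.2
    have hr : HasDerivAt (fun x:ℝ => (x:ℂ)) 1 ρ := by
      simpa using (hasDerivAt_id ρ).ofReal_comp
    have hv : HasDerivAt (fun x : ℝ => -(x:ℂ) * dI u₁ x + u₁ x + (x:ℂ) * dI u₂ x - u₂ x)
        ((ρ:ℂ) * (dI (dI u₂) ρ - dI (dI u₁) ρ)) ρ := by
      have h := (((hr.neg.mul (hfd ρ hρ)).add (hu₁d ρ hρ)).add
        (hr.mul (hgd ρ hρ))).sub (hu₂d ρ hρ)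
      refine h.congr_deriv ?_
      simp only [Pi.neg_apply]
      ring
    have : dI (fun x : ℝ => -(x:ℂ) * dI u₁ x + u₁ x + (x:ℂ) * dI u₂ x - u₂ x) ρ
        = (ρ:ℂ) * (dI (dI u₂) ρ - dI (dI u₁) ρ) := by
      rw [dI, derivWithin_of_mem_nhds hmem, hv.deriv]
    rw [this]
  have hcongr2 : ∫ ρ in Ioo (0:ℝ) 1,
      dI (fun x : ℝ => dI u₁ x / (x:ℂ) - (x:ℂ) * dI u₂ x) ρ * (starRingEnd ℂ) (dI u₂ ρ)
      = ∫ ρ in Ioo (0:ℝ) 1,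
        ((dI (dI u₁) ρ * ρ - dI u₁ ρ)/(ρ:ℂ)^2 - (dI u₂ ρ + ρ * dI (dI u₂) ρ))
          * (starRingEnd ℂ) (dI u₂ ρ) := by
    refine setIntegral_congr_fun measurableSet_Ioo (fun ρ hρ => ?_)
    have hmem : Icc (0:ℝ) 1 ∈ nhds ρ := Icc_mem_nhds hρ.1 hρ.2
    have hρC : (ρ:ℂ) ≠ 0 := Complex.ofReal_ne_zero.mpr (ne_of_gt hρ.1)
    have hr : HasDerivAt (fun x:ℝ => (x:ℂ)) 1 ρ := by
      simpa using (hasDerivAt_id ρ).ofReal_comp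
    have hv : HasDerivAt (fun x : ℝ => dI u₁ x / (x:ℂ) - (x:ℂ) * dI u₂ x)
        ((dI (dI u₁) ρ * ρ - dI u₁ ρ)/(ρ:ℂ)^2 - (dI u₂ ρ + ρ * dI (dI u₂) ρ)) ρ := by
      have h := ((hfd ρ hρ).div hr hρC).sub (hr.mul (hgd ρ hρ))
      refine h.congr_deriv ?_
      ring
    have : dI (fun x : ℝ => dI u₁ x / (x:ℂ) - (x:ℂ) * dI u₂ x) ρ
        = (dI (dI u₁) ρ * ρ - dI u₁ ρ)/(ρ:ℂ)^2 - (dI u₂ ρ + ρ * dI (dI u₂) ρ) := by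
      rw [dI, derivWithin_of_mem_nhds hmem, hv.deriv]
    rw [this]
  rw [hcongr1, hcongr2]
  exact key (dI u₁) (dI u₂) (dI (dI u₁)) (dI (dI u₂)) M hfc hf'c hgc hg'c hfd hgd
    hfb hf'b (fun ρ hρ => (hbAll ρ hρ).2.2.2.1) (fun ρ hρ => (hbAll ρ hρ).2.2.2.2)
end
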